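/- arXiv:2201.05085 — 2 statements merged into one kernel-verified Lean document; each statement's English description precedes it below -/
import Mathlib

section
/- The function φ is jointly convex in (m,ψ): for all m,m′∈[0,∞)^ℕ, all probability measures ψ,ψ′ on ℕ_0, and all λ∈[0,1], one has φ(λm+(1−λ)m′, λψ+(1−λ)ψ′) ≤ λ·φ(m,ψ) + (1−λ)·φ(m′,ψ′). -/
open MeasureTheory ProbabilityTheory Filter
open scoped ENNReal NNReal Classical

namespace BoxBose

/-- Sites of the lattice `ℤ^d`. -/
abbrev Site (d : ℕ) := Fin d → ℤ

/-- Configurations: `ω k x` is the number of points at site `x` carrying the mark `x + G k`. -/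
abbrev Config (d : ℕ) := ℕ+ → Site d → ℕ

/-- The centred box of radius `n` in `ℤ^d`, as a finite set of sites. -/
noncomputable def box (d n : ℕ) : Finset (Site d) :=
  Fintype.piFinset fun _ : Fin d => Finset.Icc (-(n : ℤ)) (n : ℤ)

/-- Restriction of a configuration to a finite set of sites. -/
def restrict {d : ℕ} (Λ : Finset (Site d)) (ω : Config d) : Config d :=
  fun k x => if x ∈ Λ then ω k x else 0

/-- Shift of a configuration by a lattice vector `z`. -/
def shift {d : ℕ} (z : Site d) (ω : Config d) : Config d := fun k x => ω k (x + z)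

/-- Shift-invariant probability measures on the configuration space (the set `M₁ˢ(Ω)`). -/
def IsShiftInvariantProb {d : ℕ} (P : Measure (Config d)) : Prop :=
  IsProbabilityMeasure P ∧ ∀ z : Site d, P.map (shift z) = P

/-- Relative entropy `H(μ|ν)` of two measures, given by the discrete formula
`H(μ|ν) = ∑ₓ [ν(x) − μ(x) + μ(x) log (μ(x)/ν(x))]` if `μ ≪ ν`, and `∞` otherwise. -/
noncomputable def Hrel {α : Type*} [MeasurableSpace α] (μ ν : Measure α) : ℝ≥0∞ :=
  if μ ≪ ν then
    ∑' x : α, ENNReal.ofReal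
      ((ν {x}).toReal - (μ {x}).toReal
        + (μ {x}).toReal * Real.log ((μ {x}).toReal / (ν {x}).toReal))
  else ⊤

/-- The entropy density `I(P)` of `P` relative to a reference measure `ν`: the limit, along
increasing centred boxes `Q ↑ ℤ^d`, of `|Q|⁻¹ H(P_Q | ν_Q)` (written as a `limsup`, which
coincides with the limit whenever the latter exists; the paper guarantees its existence). -/
noncomputable def entDens {d : ℕ} (ν P : Measure (Config d)) : ℝ≥0∞ :=
  Filter.limsup
    (fun n : ℕ =>
      Hrel (P.map (restrict (box d n))) (ν.map (restrict (box d n)))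
        / ((box d n).card : ℝ≥0∞))
    Filter.atTop

/-- `μ` is the law of a field of independent Poisson random variables, with parameter `r k`
for every coordinate `ξ⁽ᵏ⁾(x)`, `k ∈ ℕ`, `x ∈ ℤ^d`. -/
def IsPoissonField (d : ℕ) (r : ℕ+ → ℝ≥0) (μ : Measure (Config d)) : Prop :=
  IsProbabilityMeasure μ ∧
    iIndepFun
      (fun p : ℕ+ × Site d => fun ω : Config d => ω p.1 p.2) μ ∧
    ∀ (k : ℕ+) (x : Site d), μ.map (fun ω : Config d => ω k x) = poissonMeasure (r k)

/-- The data of the box version of the interacting Bose gas: deterministic box-like marks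
`G k` of cardinality `k`, a nonnegative symmetric compactly supported pair potential `v`,
a summable sequence of positive intensities `q`, and a reference marked Poisson point
process `ref` with intensities `q`. -/
structure Model (d : ℕ) where
  G : ℕ+ → Finset (Site d)
  hG : ∀ k : ℕ+, ∃ L : ℕ,
    (Fintype.piFinset fun _ : Fin d => Finset.Icc (-(L : ℤ)) (L : ℤ)) ⊆ G k ∧
    G k ⊆ (Fintype.piFinset fun _ : Fin d => Finset.Icc (-(L : ℤ) - 1) ((L : ℤ) + 1)) ∧
    (G k).card = (k : ℕ)
  v : Site d → ℝ
  hv_nonneg : ∀ i, 0 ≤ v i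
  hv_symm : ∀ i, v i = v (-i)
  hv_fin : (Function.support v).Finite
  q : ℕ+ → ℝ≥0
  hq_pos : ∀ k, 0 < q k
  hq_sum : Summable q
  ref : Measure (Config d)
  href : IsPoissonField d q ref

variable {d : ℕ}

/-- The pair interaction `T_{x,y}(G,G') = ∑_{i∈G} ∑_{j∈G'} v(x+i−y−j)`. -/
noncomputable def T (M : Model d) (x y : Site d) (A B : Finset (Site d)) : ℝ :=
  ∑ i ∈ A, ∑ j ∈ B, M.v (x + i - y - j)

/-- `v̄ = ∑_{i∈ℤ^d} v(i)`, as an extended nonnegative real. -/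
noncomputable def vbar (M : Model d) : ℝ≥0∞ := ∑' i : Site d, ENNReal.ofReal (M.v i)

/-- `v̄ = ∑_{i∈ℤ^d} v(i)`, as a real number. -/
noncomputable def vbarR (M : Model d) : ℝ := ∑' i : Site d, M.v i

/-- The energy `Φ_{0,ℤ^d}(ω)` between the origin and the whole lattice. -/
noncomputable def PhiZero (M : Model d) (ω : Config d) : ℝ≥0∞ :=
  ∑' (y : Site d) (k : ℕ+) (l : ℕ+),
    (ω k 0 : ℝ≥0∞) * (ω l y : ℝ≥0∞) * ENNReal.ofReal (T M 0 y (M.G k) (M.G l))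

/-- The counting functional `N₀^{(δ_k)}(ω)`, the number of points at the origin with mark `G k`. -/
noncomputable def Ndelta (k : ℕ+) (ω : Config d) : ℝ≥0∞ := (ω k 0 : ℝ≥0∞)

/-- The counting functional `N₀^{(ℓ)}(ω) = ∑_k k·N₀^{(δ_k)}(ω)`. -/
noncomputable def Nell (ω : Config d) : ℝ≥0∞ :=
  ∑' k : ℕ+, ((k : ℕ) : ℝ≥0∞) * (ω k 0 : ℝ≥0∞)

/-- Admissibility of a family `(P_a)_{a∈ℕ₀}` in the variational formula for `φ(m,ψ)`:
each `P_a` is a shift-invariant probability measure, and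
`∑_a ψ(a) P_a(N₀^{(δ_k)}) = m_k` for every `k ∈ ℕ`. -/
def phiAdmissible (M : Model d) (m : ℕ+ → ℝ≥0) (ψ : PMF ℕ) (P : ℕ → Measure (Config d)) : Prop :=
  (∀ a : ℕ, IsShiftInvariantProb (P a)) ∧
    ∀ k : ℕ+, (∑' a : ℕ, ψ a * ∫⁻ ω, Ndelta k ω ∂(P a)) = (m k : ℝ≥0∞)

/-- The functional minimised in the definition of `φ(m,ψ)`:
`∑_a ψ(a) [I(P_a) + P_a(Φ_{0,ℤ^d}) + 2v̄·a·P_a(N₀^{(ℓ)}) + v̄·a²]`. -/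
noncomputable def phiObjective (M : Model d) (ψ : PMF ℕ) (P : ℕ → Measure (Config d)) : ℝ≥0∞ :=
  ∑' a : ℕ, ψ a *
    (entDens M.ref (P a) + (∫⁻ ω, PhiZero M ω ∂(P a))
      + 2 * vbar M * (a : ℝ≥0∞) * (∫⁻ ω, Nell ω ∂(P a)) + vbar M * (a : ℝ≥0∞) ^ 2)

/-- The variational formula `φ(m,ψ)`. -/
noncomputable def phi (M : Model d) (m : ℕ+ → ℝ≥0) (ψ : PMF ℕ) : ℝ≥0∞ :=
  sInf { r | ∃ P : ℕ → Measure (Config d), phiAdmissible M m ψ P ∧ r = phiObjective M ψ P }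

/-- The free-energy functional
`χ(ρ_mi,ρ_ma) = inf {φ(m,ψ) : ∑_k k·m_k = ρ_mi, ∑_a a·ψ(a) = ρ_ma}`. -/
noncomputable def chi (M : Model d) (ρmi ρma : ℝ≥0∞) : ℝ≥0∞ :=
  sInf { r | ∃ (m : ℕ+ → ℝ≥0) (ψ : PMF ℕ),
    (∑' k : ℕ+, ((k : ℕ) : ℝ≥0∞) * (m k : ℝ≥0∞)) = ρmi ∧
    (∑' a : ℕ, (a : ℝ≥0∞) * ψ a) = ρma ∧ r = phi M m ψ }

/-- `χ(ρ) = χ(ρ,0)` as a real-valued function of a real density. -/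
noncomputable def chiR (M : Model d) (ρ : ℝ) : ℝ := (chi M (ENNReal.ofReal ρ) 0).toReal

/-- The total particle density `∑_k k·m_k + ∑_a a·ψ(a)` of a pair `(m,ψ)`. -/
noncomputable def massOf {d : ℕ} (m : ℕ+ → ℝ≥0) (ψ : PMF ℕ) : ℝ≥0∞ :=
  (∑' k : ℕ+, ((k : ℕ) : ℝ≥0∞) * (m k : ℝ≥0∞)) + ∑' a : ℕ, (a : ℝ≥0∞) * ψ a

/-- `(m,ψ)` is a minimiser of the constrained variational problem
`χ(ρ) = min {φ(m,ψ) : ∑_k k·m_k + ∑_a a·ψ(a) = ρ}` at density `ρ`. -/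
def IsMinimiserAt (M : Model d) (m : ℕ+ → ℝ≥0) (ψ : PMF ℕ) (ρ : ℝ) : Prop :=
  massOf (d := d) m ψ = ENNReal.ofReal ρ ∧
    ∀ (m' : ℕ+ → ℝ≥0) (ψ' : PMF ℕ),
      massOf (d := d) m' ψ' = ENNReal.ofReal ρ → phi M m ψ ≤ phi M m' ψ'

/-- The critical particle density
`ρ_c = sup {ρ ∈ (0,∞) : the constrained problem at density ρ has a minimiser (m, δ₀)}`. -/
noncomputable def rhoC (M : Model d) : ℝ≥0∞ :=
  sSup { x : ℝ≥0∞ | ∃ ρ : ℝ, 0 < ρ ∧ x = ENNReal.ofReal ρ ∧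
    ∃ m : ℕ+ → ℝ≥0, IsMinimiserAt M m (PMF.pure 0) ρ }

/-- The assumption `q_k = e^{o(k)}` as `k → ∞`. -/
def qSubexp (M : Model d) : Prop :=
  Filter.Tendsto (fun k : ℕ+ => Real.log (M.q k) / ((k : ℕ) : ℝ)) Filter.atTop (nhds 0)

/-- `e^{-x}` for `x ∈ [0,∞]`, with `e^{-∞} = 0`. -/
noncomputable def expNeg (x : ℝ≥0∞) : ℝ≥0∞ :=
  if x = ⊤ then 0 else ENNReal.ofReal (Real.exp (-x.toReal))

/-- The self-interaction `t_k = T_{0,0}(G_k,G_k)` of a `k`-mark. -/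
noncomputable def tMark (M : Model d) (k : ℕ+) : ℝ := T M 0 0 (M.G k) (M.G k)

/-- The interaction `Φ^{(k)}(ω)` between the configuration `ω` and a `k`-mark at the origin. -/
noncomputable def PhiMark (M : Model d) (k : ℕ+) (ω : Config d) : ℝ≥0∞ :=
  ∑' (x : Site d) (l : ℕ+), (ω l x : ℝ≥0∞) * ENNReal.ofReal (T M 0 x (M.G k) (M.G l))

/-- `(P_a)_{a∈ℕ₀}` attains the infimum in the variational formula for `φ(m,ψ)`. -/
def IsMinFamily (M : Model d) (m : ℕ+ → ℝ≥0) (ψ : PMF ℕ) (P : ℕ → Measure (Config d)) : Prop :=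
  phiAdmissible M m ψ P ∧ phiObjective M ψ P = phi M m ψ

/-- The relative entropy `H(m|q) = ∑_k (q_k − m_k + m_k log(m_k/q_k))` of sequences. -/
noncomputable def Hseq (M : Model d) (m : ℕ+ → ℝ≥0) : ℝ≥0∞ :=
  ∑' k : ℕ+, ENNReal.ofReal
    ((M.q k : ℝ) - (m k : ℝ) + (m k : ℝ) * Real.log ((m k : ℝ) / (M.q k : ℝ)))

/-- The non-interacting free energy `χ^{(v=0)}(ρ,0) = inf {H(m|q) : ∑_k k·m_k = ρ}`. -/
noncomputable def chiV0 (M : Model d) (ρ : ℝ) : ℝ≥0∞ :=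
  sInf { r | ∃ m : ℕ+ → ℝ≥0,
    (∑' k : ℕ+, ((k : ℕ) : ℝ≥0∞) * (m k : ℝ≥0∞)) = ENNReal.ofReal ρ ∧ r = Hseq M m }

/-- The number of particles attached to points in `Λ`: `N_Λ^{(ℓ)}(ω)`. -/
noncomputable def NellIn (Λ : Finset (Site d)) (ω : Config d) : ℝ≥0∞ :=
  ∑ x ∈ Λ, ∑' k : ℕ+, ((k : ℕ) : ℝ≥0∞) * (ω k x : ℝ≥0∞)

/-- The internal energy `Φ_{Λ,Λ}(ω)` of the configuration in `Λ`. -/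
noncomputable def PhiIn (M : Model d) (Λ : Finset (Site d)) (ω : Config d) : ℝ≥0∞ :=
  ∑ x ∈ Λ, ∑ y ∈ Λ, ∑' (k : ℕ+) (l : ℕ+),
    (ω k x : ℝ≥0∞) * (ω l y : ℝ≥0∞) * ENNReal.ofReal (T M x y (M.G k) (M.G l))

/-- `M_{Λ,Λᶜ}(ω)`: the number of particles outside `Λ` attached to points in `Λ`. -/
noncomputable def MOut (M : Model d) (Λ : Finset (Site d)) (ω : Config d) : ℝ≥0∞ :=
  ∑ x ∈ Λ, ∑' k : ℕ+,
    (ω k x : ℝ≥0∞) * (((M.G k).filter fun i => x + i ∉ Λ).card : ℝ≥0∞)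

/-- The partition function with zero Dirichlet boundary conditions:
`Z^{Dir}_{N,Λ} = E^{Dir}_Λ [e^{−Φ_{Λ,Λ}} 1{N_Λ^{(ℓ)} = N}]`, where `E^{Dir}_Λ` is the
expectation with respect to the reference process conditioned on `{M_{Λ,Λᶜ} = 0}`. -/
noncomputable def ZDir (M : Model d) (N : ℕ) (Λ : Finset (Site d)) : ℝ≥0∞ :=
  ∫⁻ ω in { ω : Config d | NellIn Λ ω = (N : ℝ≥0∞) },
    expNeg (PhiIn M Λ ω) ∂(ProbabilityTheory.cond M.ref { ω : Config d | MOut M Λ ω = 0 })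


/-! ### Auxiliary lemmas for convexity of `φ` -/

private lemma f_nonneg_aux {s t : ℝ} (hs : 0 ≤ s) (ht : 0 ≤ t) (h0 : s = 0 → t = 0) :
    0 ≤ s - t + t * Real.log (t / s) := by
  rcases eq_or_lt_of_le hs with hs0 | hs0
  · have ht0 : t = 0 := h0 hs0.symm
    simp [ht0, ← hs0]
  rcases eq_or_lt_of_le ht with ht0 | ht0
  · rw [← ht0]; simp; linarith
  · have hlog : Real.log (s / t) ≤ s / t - 1 := Real.log_le_sub_one_of_pos (div_pos hs0 ht0)
    have hneg : Real.log (t / s) = - Real.log (s / t) := by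
      rw [← Real.log_inv, inv_div]
    have h2 : 1 - s / t ≤ Real.log (t / s) := by rw [hneg]; linarith
    have h3 : t * (1 - s / t) ≤ t * Real.log (t / s) :=
      mul_le_mul_of_nonneg_left h2 ht
    have h4 : t * (1 - s / t) = t - s := by field_simp
    linarith

private lemma mul_log_div_aux {s t : ℝ} (hs : 0 < s) (ht : 0 ≤ t) :
    t * Real.log (t / s) = t * Real.log t - t * Real.log s := by
  rcases eq_or_lt_of_le ht with ht0 | ht0
  · simp [← ht0]
  · rw [Real.log_div ht0.ne' hs.ne']; ring

private lemma f_convex_aux {s u u' A B : ℝ} (hs : 0 ≤ s) (hu : 0 ≤ u) (hu' : 0 ≤ u')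
    (hA : 0 ≤ A) (hB : 0 ≤ B) (hAB : A + B = 1) :
    s - (A * u + B * u') + (A * u + B * u') * Real.log ((A * u + B * u') / s)
      ≤ A * (s - u + u * Real.log (u / s)) + B * (s - u' + u' * Real.log (u' / s)) := by
  rcases eq_or_lt_of_le hs with hs0 | hs0
  · rw [← hs0]
    simp only [div_zero, Real.log_zero, mul_zero, add_zero, zero_sub]
    nlinarith
  · have hw : 0 ≤ A * u + B * u' := by positivity
    have key := Real.convexOn_mul_log.2 (Set.mem_Ici.2 hu) (Set.mem_Ici.2 hu') hA hB hAB
    simp only [smul_eq_mul] at key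
    rw [mul_log_div_aux hs0 hw, mul_log_div_aux hs0 hu, mul_log_div_aux hs0 hu']
    nlinarith [key]

/-- `Hrel` is convex in its first argument. -/
lemma Hrel_mix {α : Type*} [MeasurableSpace α] (μ μ' ν : Measure α)
    [IsFiniteMeasure μ] [IsFiniteMeasure μ'] [IsFiniteMeasure ν]
    {a b : ℝ≥0∞} (hab : a + b = 1) :
    Hrel (a • μ + b • μ') ν ≤ a * Hrel μ ν + b * Hrel μ' ν := by
  rcases eq_or_ne a 0 with rfl | ha0
  · rw [zero_add] at hab; subst hab; simp
  rcases eq_or_ne b 0 with rfl | hb0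
  · rw [add_zero] at hab; subst hab; simp
  have ha1 : a ≤ 1 := by rw [← hab]; exact le_self_add
  have hb1 : b ≤ 1 := by rw [← hab]; exact le_add_self
  have hat : a ≠ ⊤ := (lt_of_le_of_lt ha1 ENNReal.one_lt_top).ne
  have hbt : b ≠ ⊤ := (lt_of_le_of_lt hb1 ENNReal.one_lt_top).ne
  by_cases hmu : μ ≪ ν
  swap
  · have hμtop : Hrel μ ν = ⊤ := by rw [Hrel, if_neg hmu]
    rw [hμtop, ENNReal.mul_top ha0]; simp
  by_cases hmu' : μ' ≪ ν
  swap
  · have hμtop : Hrel μ' ν = ⊤ := by rw [Hrel, if_neg hmu']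
    rw [hμtop, ENNReal.mul_top hb0]; simp
  have hmix : (a • μ + b • μ') ≪ ν :=
    Measure.AbsolutelyContinuous.add_left (hmu.smul_left a) (hmu'.smul_left b)
  rw [Hrel, Hrel, Hrel, if_pos hmix, if_pos hmu, if_pos hmu',
    ← ENNReal.tsum_mul_left, ← ENNReal.tsum_mul_left, ← ENNReal.tsum_add]
  refine ENNReal.tsum_le_tsum fun x => ?_
  have hAB : a.toReal + b.toReal = 1 := by
    rw [← ENNReal.toReal_add hat hbt, hab, ENNReal.toReal_one]
  have hA : 0 ≤ a.toReal := ENNReal.toReal_nonneg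
  have hB : 0 ≤ b.toReal := ENNReal.toReal_nonneg
  have hs : 0 ≤ (ν {x}).toReal := ENNReal.toReal_nonneg
  have hu : 0 ≤ (μ {x}).toReal := ENNReal.toReal_nonneg
  have hu' : 0 ≤ (μ' {x}).toReal := ENNReal.toReal_nonneg
  have hval : ((a • μ + b • μ') {x}).toReal
      = a.toReal * (μ {x}).toReal + b.toReal * (μ' {x}).toReal := by
    rw [Measure.add_apply, Measure.smul_apply, Measure.smul_apply, smul_eq_mul, smul_eq_mul,
      ENNReal.toReal_add (ENNReal.mul_ne_top hat (measure_ne_top μ _))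
        (ENNReal.mul_ne_top hbt (measure_ne_top μ' _)),
      ENNReal.toReal_mul, ENNReal.toReal_mul]
  have h0 : (ν {x}).toReal = 0 → (μ {x}).toReal = 0 := by
    intro h
    have hν : ν {x} = 0 := by
      rcases (ENNReal.toReal_eq_zero_iff _).mp h with h' | h'
      · exact h'
      · exact absurd h' (measure_ne_top ν _)
    rw [hmu hν]; simp
  have h0' : (ν {x}).toReal = 0 → (μ' {x}).toReal = 0 := by
    intro h
    have hν : ν {x} = 0 := by
      rcases (ENNReal.toReal_eq_zero_iff _).mp h with h' | h'
      · exact h'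
      · exact absurd h' (measure_ne_top ν _)
    rw [hmu' hν]; simp
  have hfu : 0 ≤ (ν {x}).toReal - (μ {x}).toReal
      + (μ {x}).toReal * Real.log ((μ {x}).toReal / (ν {x}).toReal) :=
    f_nonneg_aux hs hu h0
  have hfu' : 0 ≤ (ν {x}).toReal - (μ' {x}).toReal
      + (μ' {x}).toReal * Real.log ((μ' {x}).toReal / (ν {x}).toReal) :=
    f_nonneg_aux hs hu' h0'
  calc ENNReal.ofReal ((ν {x}).toReal - ((a • μ + b • μ') {x}).toReal
        + ((a • μ + b • μ') {x}).toReal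
          * Real.log (((a • μ + b • μ') {x}).toReal / (ν {x}).toReal))
      ≤ ENNReal.ofReal (a.toReal * ((ν {x}).toReal - (μ {x}).toReal
          + (μ {x}).toReal * Real.log ((μ {x}).toReal / (ν {x}).toReal))
        + b.toReal * ((ν {x}).toReal - (μ' {x}).toReal
          + (μ' {x}).toReal * Real.log ((μ' {x}).toReal / (ν {x}).toReal))) := by
        rw [hval]
        exact ENNReal.ofReal_le_ofReal (f_convex_aux hs hu hu' hA hB hAB)
    _ = ENNReal.ofReal (a.toReal * ((ν {x}).toReal - (μ {x}).toReal
          + (μ {x}).toReal * Real.log ((μ {x}).toReal / (ν {x}).toReal)))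
        + ENNReal.ofReal (b.toReal * ((ν {x}).toReal - (μ' {x}).toReal
          + (μ' {x}).toReal * Real.log ((μ' {x}).toReal / (ν {x}).toReal))) :=
        ENNReal.ofReal_add (mul_nonneg hA hfu) (mul_nonneg hB hfu')
    _ = a * ENNReal.ofReal ((ν {x}).toReal - (μ {x}).toReal
          + (μ {x}).toReal * Real.log ((μ {x}).toReal / (ν {x}).toReal))
        + b * ENNReal.ofReal ((ν {x}).toReal - (μ' {x}).toReal
          + (μ' {x}).toReal * Real.log ((μ' {x}).toReal / (ν {x}).toReal)) := by
        rw [ENNReal.ofReal_mul hA, ENNReal.ofReal_mul hB,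
          ENNReal.ofReal_toReal hat, ENNReal.ofReal_toReal hbt]

/-- Subadditivity of `limsup` on `ℝ≥0∞` along `atTop`. -/
lemma limsup_add_le_aux (u v : ℕ → ℝ≥0∞) :
    Filter.limsup (fun n => u n + v n) Filter.atTop
      ≤ Filter.limsup u Filter.atTop + Filter.limsup v Filter.atTop := by
  refine ENNReal.le_of_forall_pos_le_add fun ε hε hfin => ?_
  have hA : Filter.limsup u Filter.atTop ≠ ⊤ :=
    (lt_of_le_of_lt le_self_add hfin).ne
  have hB : Filter.limsup v Filter.atTop ≠ ⊤ :=
    (lt_of_le_of_lt le_add_self hfin).ne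
  have hε2 : ((ε : ℝ≥0∞) / 2) ≠ 0 := by
    simp [ENNReal.div_eq_zero_iff, hε.ne']
  have h1 : ∀ᶠ n in Filter.atTop, u n < Filter.limsup u Filter.atTop + (ε : ℝ≥0∞) / 2 :=
    Filter.eventually_lt_of_limsup_lt (ENNReal.lt_add_right hA hε2)
  have h2 : ∀ᶠ n in Filter.atTop, v n < Filter.limsup v Filter.atTop + (ε : ℝ≥0∞) / 2 :=
    Filter.eventually_lt_of_limsup_lt (ENNReal.lt_add_right hB hε2)
  have hev : ∀ᶠ n in Filter.atTop, u n + v n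
      ≤ (Filter.limsup u Filter.atTop + (ε : ℝ≥0∞) / 2)
        + (Filter.limsup v Filter.atTop + (ε : ℝ≥0∞) / 2) := by
    filter_upwards [h1, h2] with n hn1 hn2
    exact add_le_add hn1.le hn2.le
  calc Filter.limsup (fun n => u n + v n) Filter.atTop
      ≤ (Filter.limsup u Filter.atTop + (ε : ℝ≥0∞) / 2)
        + (Filter.limsup v Filter.atTop + (ε : ℝ≥0∞) / 2) :=
        Filter.limsup_le_of_le (by isBoundedDefault) hev
    _ = Filter.limsup u Filter.atTop + Filter.limsup v Filter.atTop
        + ((ε : ℝ≥0∞) / 2 + (ε : ℝ≥0∞) / 2) := by ring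
    _ = Filter.limsup u Filter.atTop + Filter.limsup v Filter.atTop + (ε : ℝ≥0∞) := by
        rw [ENNReal.add_halves]

lemma measurable_restrict_aux {d : ℕ} (Λ : Finset (Site d)) :
    Measurable (restrict Λ) := by
  refine measurable_pi_lambda _ fun k => measurable_pi_lambda _ fun x => ?_
  by_cases hx : x ∈ Λ
  · simpa [restrict, hx] using
      (by fun_prop : Measurable fun c : Config d => c k x)
  · simpa [restrict, hx] using measurable_const

lemma measurable_shift_aux {d : ℕ} (z : Site d) :
    Measurable (shift (d := d) z) := by
  refine measurable_pi_lambda _ fun k => measurable_pi_lambda _ fun x => ?_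
  exact (measurable_pi_apply (x + z)).comp (measurable_pi_apply k)

/-- The entropy density is convex. -/
lemma entDens_mix {d : ℕ} (ν P P' : Measure (Config d))
    [IsFiniteMeasure ν] [IsFiniteMeasure P] [IsFiniteMeasure P']
    {a b : ℝ≥0∞} (hab : a + b = 1) :
    entDens ν (a • P + b • P') ≤ a * entDens ν P + b * entDens ν P' := by
  have ha1 : a ≤ 1 := by rw [← hab]; exact le_self_add
  have hb1 : b ≤ 1 := by rw [← hab]; exact le_add_self
  have hat : a ≠ ⊤ := (lt_of_le_of_lt ha1 ENNReal.one_lt_top).ne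
  have hbt : b ≠ ⊤ := (lt_of_le_of_lt hb1 ENNReal.one_lt_top).ne
  rw [entDens, entDens, entDens, ← ENNReal.limsup_const_mul_of_ne_top hat,
    ← ENNReal.limsup_const_mul_of_ne_top hbt]
  refine le_trans (Filter.limsup_le_limsup (Filter.Eventually.of_forall fun n => ?_))
    (limsup_add_le_aux _ _)
  beta_reduce
  have hmeas := measurable_restrict_aux (d := d) (box d n)
  haveI : IsFiniteMeasure (P.map (restrict (box d n))) := Measure.isFiniteMeasure_map _ _
  haveI : IsFiniteMeasure (P'.map (restrict (box d n))) := Measure.isFiniteMeasure_map _ _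
  haveI : IsFiniteMeasure (ν.map (restrict (box d n))) := Measure.isFiniteMeasure_map _ _
  rw [Measure.map_add _ _ hmeas, Measure.map_smul, Measure.map_smul]
  calc Hrel (a • P.map (restrict (box d n)) + b • P'.map (restrict (box d n)))
        (ν.map (restrict (box d n))) / ((box d n).card : ℝ≥0∞)
      ≤ (a * Hrel (P.map (restrict (box d n))) (ν.map (restrict (box d n)))
          + b * Hrel (P'.map (restrict (box d n))) (ν.map (restrict (box d n))))
          / ((box d n).card : ℝ≥0∞) :=
        ENNReal.div_le_div_right (Hrel_mix _ _ _ hab) _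
    _ = a * (Hrel (P.map (restrict (box d n))) (ν.map (restrict (box d n)))
          / ((box d n).card : ℝ≥0∞))
        + b * (Hrel (P'.map (restrict (box d n))) (ν.map (restrict (box d n)))
          / ((box d n).card : ℝ≥0∞)) := by
        simp only [ENNReal.add_div, ENNReal.div_eq_inv_mul]
        ring

lemma phi_le_mix {d : ℕ} (M : Model d) (m m' : ℕ+ → ℝ≥0) (ψ ψ' ψc : PMF ℕ)
    (lam : ℝ≥0) (hlam : lam ≤ 1)
    (hψc : ∀ a : ℕ, ψc a = (lam : ℝ≥0∞) * ψ a + ((1 - lam : ℝ≥0) : ℝ≥0∞) * ψ' a)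
    (P P' : ℕ → Measure (Config d))
    (hP : phiAdmissible M m ψ P) (hP' : phiAdmissible M m' ψ' P') :
    phi M (fun k => lam * m k + (1 - lam) * m' k) ψc
      ≤ (lam : ℝ≥0∞) * phiObjective M ψ P
        + ((1 - lam : ℝ≥0) : ℝ≥0∞) * phiObjective M ψ' P' := by
  classical
  set L : ℝ≥0∞ := (lam : ℝ≥0∞) with hL
  set L' : ℝ≥0∞ := ((1 - lam : ℝ≥0) : ℝ≥0∞) with hL'
  set α : ℕ → ℝ≥0∞ := fun a => L * ψ a / ψc a with hα
  set β : ℕ → ℝ≥0∞ := fun a => L' * ψ' a / ψc a with hβ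
  set Q : ℕ → Measure (Config d) :=
    fun a => if ψc a = 0 then P a else α a • P a + β a • P' a with hQ
  have hαβ : ∀ a, ψc a ≠ 0 → α a + β a = 1 := by
    intro a h
    rw [hα, hβ]
    simp only
    rw [ENNReal.div_add_div_same, ← hψc a, ENNReal.div_self h (PMF.apply_ne_top ψc a)]
  have hzero : ∀ a, ψc a = 0 → L * ψ a = 0 ∧ L' * ψ' a = 0 := by
    intro a h
    have := (hψc a).symm.trans h
    exact add_eq_zero.mp this
  -- per-`a` lintegral splitting
  have hint : ∀ (a : ℕ) (f : Config d → ℝ≥0∞), ψc a ≠ 0 →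
      ∫⁻ ω, f ω ∂(Q a) = α a * ∫⁻ ω, f ω ∂(P a) + β a * ∫⁻ ω, f ω ∂(P' a) := by
    intro a f h
    rw [hQ]
    simp only [if_neg h]
    rw [lintegral_add_measure, lintegral_smul_measure, lintegral_smul_measure, smul_eq_mul, smul_eq_mul]
  have hcancel : ∀ (a : ℕ) (X Y : ℝ≥0∞), ψc a ≠ 0 →
      ψc a * (α a * X + β a * Y) = L * ψ a * X + L' * ψ' a * Y := by
    intro a X Y h
    rw [mul_add, ← mul_assoc, ← mul_assoc, hα, hβ]
    simp only
    rw [ENNReal.mul_div_cancel h (PMF.apply_ne_top ψc a),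
      ENNReal.mul_div_cancel h (PMF.apply_ne_top ψc a)]
  -- admissibility of the mixture family
  have hadm : phiAdmissible M (fun k => lam * m k + (1 - lam) * m' k) ψc Q := by
    constructor
    · intro a
      by_cases h : ψc a = 0
      · rw [hQ]; simp only [if_pos h]; exact hP.1 a
      · rw [hQ]; simp only [if_neg h]
        haveI h1 := (hP.1 a).1
        haveI h2 := (hP'.1 a).1
        constructor
        · constructor
          rw [Measure.add_apply, Measure.smul_apply, Measure.smul_apply,
            measure_univ, measure_univ, smul_eq_mul, smul_eq_mul, mul_one, mul_one]
          exact hαβ a h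
        · intro z
          rw [Measure.map_add _ _ (measurable_shift_aux z), Measure.map_smul,
            Measure.map_smul, (hP.1 a).2 z, (hP'.1 a).2 z]
    · intro k
      have hterm : ∀ a : ℕ, ψc a * ∫⁻ ω, Ndelta k ω ∂(Q a)
          = L * (ψ a * ∫⁻ ω, Ndelta k ω ∂(P a))
            + L' * (ψ' a * ∫⁻ ω, Ndelta k ω ∂(P' a)) := by
        intro a
        by_cases h : ψc a = 0
        · rw [h, zero_mul, ← mul_assoc, ← mul_assoc,
            (hzero a h).1, (hzero a h).2, zero_mul, zero_mul, add_zero]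
        · rw [hint a _ h, hcancel a _ _ h, mul_assoc, mul_assoc]
      calc (∑' a : ℕ, ψc a * ∫⁻ ω, Ndelta k ω ∂(Q a))
          = ∑' a : ℕ, (L * (ψ a * ∫⁻ ω, Ndelta k ω ∂(P a))
              + L' * (ψ' a * ∫⁻ ω, Ndelta k ω ∂(P' a))) := tsum_congr hterm
        _ = L * (∑' a : ℕ, ψ a * ∫⁻ ω, Ndelta k ω ∂(P a))
            + L' * (∑' a : ℕ, ψ' a * ∫⁻ ω, Ndelta k ω ∂(P' a)) := by
            rw [ENNReal.tsum_add, ENNReal.tsum_mul_left, ENNReal.tsum_mul_left]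
        _ = L * (m k : ℝ≥0∞) + L' * (m' k : ℝ≥0∞) := by rw [hP.2 k, hP'.2 k]
        _ = ((lam * m k + (1 - lam) * m' k : ℝ≥0) : ℝ≥0∞) := by
            rw [ENNReal.coe_add, ENNReal.coe_mul, ENNReal.coe_mul]
  -- the objective of the mixture is dominated by the mixture of the objectives
  have hobj : phiObjective M ψc Q
      ≤ L * phiObjective M ψ P + L' * phiObjective M ψ' P' := by
    rw [phiObjective, phiObjective, phiObjective, ← ENNReal.tsum_mul_left,
      ← ENNReal.tsum_mul_left, ← ENNReal.tsum_add]
    refine ENNReal.tsum_le_tsum fun a => ?_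
    by_cases h : ψc a = 0
    · rw [h, zero_mul]
      exact zero_le
    · haveI h1 := (hP.1 a).1
      haveI h2 := (hP'.1 a).1
      haveI h3 := M.href.1
      have hQa : Q a = α a • P a + β a • P' a := by rw [hQ]; simp only [if_neg h]
      have hE : entDens M.ref (Q a)
          ≤ α a * entDens M.ref (P a) + β a * entDens M.ref (P' a) := by
        rw [hQa]; exact entDens_mix _ _ _ (hαβ a h)
      have hΦ : ∫⁻ ω, PhiZero M ω ∂(Q a)
          = α a * ∫⁻ ω, PhiZero M ω ∂(P a) + β a * ∫⁻ ω, PhiZero M ω ∂(P' a) :=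
        hint a _ h
      have hN : ∫⁻ ω, Nell ω ∂(Q a)
          = α a * ∫⁻ ω, Nell ω ∂(P a) + β a * ∫⁻ ω, Nell ω ∂(P' a) :=
        hint a _ h
      have hconst : vbar M * (a : ℝ≥0∞) ^ 2
          = (α a + β a) * (vbar M * (a : ℝ≥0∞) ^ 2) := by
        rw [hαβ a h, one_mul]
      have hmain : entDens M.ref (Q a) + (∫⁻ ω, PhiZero M ω ∂(Q a))
            + 2 * vbar M * (a : ℝ≥0∞) * (∫⁻ ω, Nell ω ∂(Q a)) + vbar M * (a : ℝ≥0∞) ^ 2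
          ≤ α a * (entDens M.ref (P a) + (∫⁻ ω, PhiZero M ω ∂(P a))
              + 2 * vbar M * (a : ℝ≥0∞) * (∫⁻ ω, Nell ω ∂(P a)) + vbar M * (a : ℝ≥0∞) ^ 2)
            + β a * (entDens M.ref (P' a) + (∫⁻ ω, PhiZero M ω ∂(P' a))
              + 2 * vbar M * (a : ℝ≥0∞) * (∫⁻ ω, Nell ω ∂(P' a))
              + vbar M * (a : ℝ≥0∞) ^ 2) := by
        calc entDens M.ref (Q a) + (∫⁻ ω, PhiZero M ω ∂(Q a))
              + 2 * vbar M * (a : ℝ≥0∞) * (∫⁻ ω, Nell ω ∂(Q a))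
              + vbar M * (a : ℝ≥0∞) ^ 2
            ≤ (α a * entDens M.ref (P a) + β a * entDens M.ref (P' a))
              + (α a * ∫⁻ ω, PhiZero M ω ∂(P a) + β a * ∫⁻ ω, PhiZero M ω ∂(P' a))
              + 2 * vbar M * (a : ℝ≥0∞)
                * (α a * ∫⁻ ω, Nell ω ∂(P a) + β a * ∫⁻ ω, Nell ω ∂(P' a))
              + (α a + β a) * (vbar M * (a : ℝ≥0∞) ^ 2) := by
              rw [hΦ, hN, ← hconst]
              gcongr
          _ = α a * (entDens M.ref (P a) + (∫⁻ ω, PhiZero M ω ∂(P a))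
                + 2 * vbar M * (a : ℝ≥0∞) * (∫⁻ ω, Nell ω ∂(P a))
                + vbar M * (a : ℝ≥0∞) ^ 2)
              + β a * (entDens M.ref (P' a) + (∫⁻ ω, PhiZero M ω ∂(P' a))
                + 2 * vbar M * (a : ℝ≥0∞) * (∫⁻ ω, Nell ω ∂(P' a))
                + vbar M * (a : ℝ≥0∞) ^ 2) := by ring
      calc ψc a * (entDens M.ref (Q a) + (∫⁻ ω, PhiZero M ω ∂(Q a))
            + 2 * vbar M * (a : ℝ≥0∞) * (∫⁻ ω, Nell ω ∂(Q a)) + vbar M * (a : ℝ≥0∞) ^ 2)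
          ≤ ψc a * (α a * (entDens M.ref (P a) + (∫⁻ ω, PhiZero M ω ∂(P a))
              + 2 * vbar M * (a : ℝ≥0∞) * (∫⁻ ω, Nell ω ∂(P a)) + vbar M * (a : ℝ≥0∞) ^ 2)
            + β a * (entDens M.ref (P' a) + (∫⁻ ω, PhiZero M ω ∂(P' a))
              + 2 * vbar M * (a : ℝ≥0∞) * (∫⁻ ω, Nell ω ∂(P' a))
              + vbar M * (a : ℝ≥0∞) ^ 2)) := mul_le_mul_right hmain _
        _ = L * ψ a * (entDens M.ref (P a) + (∫⁻ ω, PhiZero M ω ∂(P a))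
              + 2 * vbar M * (a : ℝ≥0∞) * (∫⁻ ω, Nell ω ∂(P a)) + vbar M * (a : ℝ≥0∞) ^ 2)
            + L' * ψ' a * (entDens M.ref (P' a) + (∫⁻ ω, PhiZero M ω ∂(P' a))
              + 2 * vbar M * (a : ℝ≥0∞) * (∫⁻ ω, Nell ω ∂(P' a))
              + vbar M * (a : ℝ≥0∞) ^ 2) := hcancel a _ _ h
        _ = L * (ψ a * (entDens M.ref (P a) + (∫⁻ ω, PhiZero M ω ∂(P a))
              + 2 * vbar M * (a : ℝ≥0∞) * (∫⁻ ω, Nell ω ∂(P a)) + vbar M * (a : ℝ≥0∞) ^ 2))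
            + L' * (ψ' a * (entDens M.ref (P' a) + (∫⁻ ω, PhiZero M ω ∂(P' a))
              + 2 * vbar M * (a : ℝ≥0∞) * (∫⁻ ω, Nell ω ∂(P' a))
              + vbar M * (a : ℝ≥0∞) ^ 2)) := by ring
  exact le_trans (sInf_le ⟨Q, hadm, rfl⟩) hobj

/-- Lemma: `φ` is jointly convex in `(m,ψ)`.
For all `m, m' ∈ [0,∞)^ℕ`, all probability measures `ψ, ψ'` on `ℕ₀` and all `λ ∈ [0,1]`,
`φ(λm+(1−λ)m', λψ+(1−λ)ψ') ≤ λ·φ(m,ψ) + (1−λ)·φ(m',ψ')`. -/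
theorem phi_convex {d : ℕ} (hd : 0 < d) (M : Model d)
    (m m' : ℕ+ → ℝ≥0) (ψ ψ' ψc : PMF ℕ) (lam : ℝ≥0) (hlam : lam ≤ 1)
    (hψc : ∀ a : ℕ, ψc a = (lam : ℝ≥0∞) * ψ a + ((1 - lam : ℝ≥0) : ℝ≥0∞) * ψ' a) :
    phi M (fun k => lam * m k + (1 - lam) * m' k) ψc
      ≤ (lam : ℝ≥0∞) * phi M m ψ + ((1 - lam : ℝ≥0) : ℝ≥0∞) * phi M m' ψ' := by
  classical
  rcases eq_or_ne lam 0 with rfl | hl0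
  · have hm : (fun k => (0 : ℝ≥0) * m k + (1 - 0) * m' k) = m' := by
      funext k; simp
    have hψ : ψc = ψ' := by
      apply PMF.ext; intro a; simpa using hψc a
    rw [hm, hψ]; simp
  rcases eq_or_ne lam 1 with rfl | hl1
  · have hm : (fun k => (1 : ℝ≥0) * m k + (1 - 1) * m' k) = m := by
      funext k; simp
    have hψ : ψc = ψ := by
      apply PMF.ext; intro a; simpa using hψc a
    rw [hm, hψ]; simp
  have hl0' : (lam : ℝ≥0∞) ≠ 0 := by exact_mod_cast hl0
  have hl1' : ((1 - lam : ℝ≥0) : ℝ≥0∞) ≠ 0 := by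
    have : (1 - lam : ℝ≥0) ≠ 0 := by
      intro h
      exact hl1 (le_antisymm hlam (tsub_eq_zero_iff_le.mp h))
    exact_mod_cast this
  rcases eq_or_ne (phi M m ψ) ⊤ with hA | hA
  · rw [hA, ENNReal.mul_top hl0']; simp
  rcases eq_or_ne (phi M m' ψ') ⊤ with hB | hB
  · rw [hB, ENNReal.mul_top hl1']; simp
  refine ENNReal.le_of_forall_pos_le_add fun ε hε hfin => ?_
  have hε' : ((ε : ℝ≥0∞)) ≠ 0 := by exact_mod_cast hε.ne'
  obtain ⟨r, hrS, hr⟩ : ∃ r ∈ { r | ∃ P : ℕ → Measure (Config d),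
      phiAdmissible M m ψ P ∧ r = phiObjective M ψ P }, r < phi M m ψ + ε := by
    have hphi : phi M m ψ = sInf { r | ∃ P : ℕ → Measure (Config d),
        phiAdmissible M m ψ P ∧ r = phiObjective M ψ P } := rfl
    refine sInf_lt_iff.mp ?_
    rw [← hphi]
    exact ENNReal.lt_add_right hA hε'
  obtain ⟨r', hrS', hr'⟩ : ∃ r' ∈ { r | ∃ P : ℕ → Measure (Config d),
      phiAdmissible M m' ψ' P ∧ r = phiObjective M ψ' P }, r' < phi M m' ψ' + ε := by
    have hphi : phi M m' ψ' = sInf { r | ∃ P : ℕ → Measure (Config d),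
        phiAdmissible M m' ψ' P ∧ r = phiObjective M ψ' P } := rfl
    refine sInf_lt_iff.mp ?_
    rw [← hphi]
    exact ENNReal.lt_add_right hB hε'
  obtain ⟨P, hP, rfl⟩ := hrS
  obtain ⟨P', hP', rfl⟩ := hrS'
  have hLL : (lam : ℝ≥0∞) + ((1 - lam : ℝ≥0) : ℝ≥0∞) = 1 := by
    rw [← ENNReal.coe_add, add_tsub_cancel_of_le hlam, ENNReal.coe_one]
  calc phi M (fun k => lam * m k + (1 - lam) * m' k) ψc
      ≤ (lam : ℝ≥0∞) * phiObjective M ψ P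
        + ((1 - lam : ℝ≥0) : ℝ≥0∞) * phiObjective M ψ' P' :=
        phi_le_mix M m m' ψ ψ' ψc lam hlam hψc P P' hP hP'
    _ ≤ (lam : ℝ≥0∞) * (phi M m ψ + ε)
        + ((1 - lam : ℝ≥0) : ℝ≥0∞) * (phi M m' ψ' + ε) :=
        add_le_add (mul_le_mul_right hr.le _) (mul_le_mul_right hr'.le _)
    _ = (lam : ℝ≥0∞) * phi M m ψ + ((1 - lam : ℝ≥0) : ℝ≥0∞) * phi M m' ψ'
        + ((lam : ℝ≥0∞) + ((1 - lam : ℝ≥0) : ℝ≥0∞)) * (ε : ℝ≥0∞) := by ring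
    _ = (lam : ℝ≥0∞) * phi M m ψ + ((1 - lam : ℝ≥0) : ℝ≥0∞) * phi M m' ψ' + (ε : ℝ≥0∞) := by
        rw [hLL, one_mul]


end BoxBose
end

section
/- For every m∈[0,∞)^ℕ, the map ψ ↦ φ(m,ψ) is non-decreasing with respect to the stochastic ordering: if ψ ≤_st ψ′, i.e. ψ([a,∞)) ≤ ψ′([a,∞)) for all a∈ℕ_0, then φ(m,ψ) ≤ φ(m,ψ′). Consequently, for each fixed ρ_mi ≥ 0, the map ρ_ma ↦ χ(ρ_mi, ρ_ma) is non-decreasing. -/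
open MeasureTheory ProbabilityTheory Filter
open scoped ENNReal NNReal Classical

namespace BoxBose

variable {d : ℕ}

section Proofs
variable {d : ℕ}


/-! ### Real/ENNReal auxiliary lemmas -/

/-- The integrand of relative entropy. -/
noncomputable def hent (a b : ℝ) : ℝ := a - b + b * Real.log (b / a)

lemma hent_zero_right (a : ℝ) : hent a 0 = a := by simp [hent]

lemma hent_nonneg {a b : ℝ} (ha : 0 < a) (hb : 0 ≤ b) : 0 ≤ hent a b := by
  rcases eq_or_lt_of_le hb with h | hb'
  · simp [hent, ← h, ha.le]
  · have hlog : Real.log (a / b) ≤ a / b - 1 :=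
      Real.log_le_sub_one_of_pos (div_pos ha hb')
    have hlog' : 1 - a / b ≤ Real.log (b / a) := by
      have hh : Real.log (b / a) = - Real.log (a / b) := by
        rw [← Real.log_inv]; congr 1; rw [inv_div]
      linarith
    have h2 := mul_le_mul_of_nonneg_left hlog' hb
    have hba : b * (a / b) = a := by field_simp
    unfold hent; nlinarith

lemma ofReal_tsum_le {ι : Type*} {f : ι → ℝ} (hf : Summable f) :
    ENNReal.ofReal (∑' b, f b) ≤ ∑' b, ENNReal.ofReal (f b) := by
  have habs : Summable fun b => |f b| := hf.abs
  have hmax : Summable fun b => max (f b) 0 := by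
    have : (fun b => max (f b) 0) = fun b => (|f b| + f b) / 2 := by
      funext b; rcases le_total 0 (f b) with h | h
      · rw [max_eq_left h, abs_of_nonneg h]; ring
      · rw [max_eq_right h, abs_of_nonpos h]; ring
    rw [this]; exact (habs.add hf).div_const 2
  have h1 : (∑' b, f b) ≤ ∑' b, max (f b) 0 :=
    Summable.tsum_le_tsum (fun b => le_max_left _ _) hf hmax
  calc ENNReal.ofReal (∑' b, f b) ≤ ENNReal.ofReal (∑' b, max (f b) 0) :=
        ENNReal.ofReal_le_ofReal h1
    _ = ∑' b, ENNReal.ofReal (max (f b) 0) :=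
        ENNReal.ofReal_tsum_of_nonneg (fun b => le_max_right _ _) hmax
    _ = ∑' b, ENNReal.ofReal (f b) := by
        congr 1; funext b; rcases le_total 0 (f b) with h | h
        · rw [max_eq_left h]
        · rw [max_eq_right h, ENNReal.ofReal_of_nonpos h, ENNReal.ofReal_zero]

/-- Countable Jensen inequality for the entropy integrand `hent c ·`. -/
lemma key_convex {ι : Type*} {c : ℝ} (hc : 0 ≤ c) (w t : ι → ℝ)
    (hw : ∀ b, 0 ≤ w b) (ht : ∀ b, 0 ≤ t b)
    (hws : Summable w) (hw1 : ∑' b, w b = 1)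
    (hwt : Summable fun b => w b * t b)
    (hzero : c = 0 → ∀ b, w b * t b = 0) :
    ENNReal.ofReal (hent c (∑' b, w b * t b)) ≤
      ∑' b, ENNReal.ofReal (w b) * ENNReal.ofReal (hent c (t b)) := by
  rcases eq_or_lt_of_le hc with hc0 | hcpos
  · -- c = 0 : T = 0 and LHS = 0
    have hT : (∑' b, w b * t b) = 0 := by
      have : (fun b => w b * t b) = fun _ => (0:ℝ) := funext (hzero hc0.symm)
      rw [this, tsum_zero]
    rw [hT, ← hc0, hent_zero_right, ENNReal.ofReal_zero]
    exact zero_le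
  · set T := ∑' b, w b * t b with hTdef
    have hTnn : 0 ≤ T := tsum_nonneg fun b => mul_nonneg (hw b) (ht b)
    rcases eq_or_lt_of_le hTnn with hT0 | hTpos
    · -- T = 0 case: equality with ofReal c
      have hterm : ∀ b, w b * t b = 0 := by
        intro b
        have hle : w b * t b ≤ ∑' b, w b * t b :=
          Summable.le_tsum hwt b fun j _ => mul_nonneg (hw j) (ht j)
        have hge : 0 ≤ w b * t b := mul_nonneg (hw b) (ht b)
        rw [← hTdef, ← hT0] at hle
        linarith
      rw [← hT0, hent_zero_right]
      have : ∀ b, ENNReal.ofReal (w b) * ENNReal.ofReal (hent c (t b)) =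
          ENNReal.ofReal (w b) * ENNReal.ofReal c := by
        intro b
        rcases eq_or_ne (w b) 0 with h | h
        · simp [h]
        · have : t b = 0 := by
            have := hterm b
            rcases mul_eq_zero.1 this with h' | h'
            · exact absurd h' h
            · exact h'
          rw [this, hent_zero_right]
      rw [tsum_congr this, ENNReal.tsum_mul_right,
        ← ENNReal.ofReal_tsum_of_nonneg hw hws, hw1, ENNReal.ofReal_one, one_mul]
    · -- main case T > 0
      set L := Real.log (T / c) with hL
      set aff : ℝ → ℝ := fun s => (c - T) + L * s with haff
      have hA1 : ∀ b, aff (t b) ≤ hent c (t b) := by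
        intro b
        rcases eq_or_lt_of_le (ht b) with h0 | hpos
        · rw [← h0]; simp only [haff, hent_zero_right, mul_zero, add_zero]
          linarith
        · -- t b > 0
          have hy : Real.log (T / t b) = L - Real.log (t b / c) := by
            rw [hL, Real.log_div (ne_of_gt hTpos) (ne_of_gt hcpos),
              Real.log_div (ne_of_gt hpos) (ne_of_gt hcpos),
              Real.log_div (ne_of_gt hTpos) (ne_of_gt hpos)]
            ring
          have hexp : Real.log (T / t b) + 1 ≤ T / t b := by
            have h := Real.add_one_le_exp (Real.log (T / t b))
            rwa [Real.exp_log (div_pos hTpos hpos)] at h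
          have hkey : t b * (L - Real.log (t b / c) + 1) ≤ T := by
            have h2 : t b * (Real.log (T / t b) + 1) ≤ t b * (T / t b) :=
              mul_le_mul_of_nonneg_left hexp (ht b)
            have h3 : t b * (T / t b) = T := by field_simp
            rw [← hy]; linarith [h2, h3.le, h3.ge]
          unfold aff
          unfold hent
          nlinarith [hkey]
      have hsum1 : Summable fun b => w b * (c - T) := hws.mul_right _
      have hsum2 : Summable fun b => w b * (L * t b) := by
        have : (fun b => w b * (L * t b)) = fun b => L * (w b * t b) := by
          funext b; ring
        rw [this]; exact hwt.mul_left L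
      have hsumaff : Summable fun b => w b * aff (t b) := by
        have : (fun b => w b * aff (t b))
            = fun b => w b * (c - T) + w b * (L * t b) := by
          funext b; simp only [haff]; ring
        rw [this]; exact hsum1.add hsum2
      have hA3 : (∑' b, w b * aff (t b)) = aff T := by
        have : (fun b => w b * aff (t b))
            = fun b => w b * (c - T) + L * (w b * t b) := by
          funext b; simp only [haff]; ring
        rw [this, Summable.tsum_add (hws.mul_right _) (hwt.mul_left L),
          tsum_mul_right, tsum_mul_left, hw1, one_mul, ← hTdef]
      have hA2 : hent c T = aff T := by simp only [haff, hent, hL]; ring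
      calc ENNReal.ofReal (hent c T) = ENNReal.ofReal (∑' b, w b * aff (t b)) := by
            rw [hA3, hA2]
        _ ≤ ∑' b, ENNReal.ofReal (w b * aff (t b)) := ofReal_tsum_le hsumaff
        _ ≤ ∑' b, ENNReal.ofReal (w b) * ENNReal.ofReal (hent c (t b)) := by
            refine ENNReal.tsum_le_tsum fun b => ?_
            rw [ENNReal.ofReal_mul (hw b)]
            exact mul_le_mul' le_rfl (ENNReal.ofReal_le_ofReal (hA1 b))


/-! ### Configuration space basics -/

variable {d : ℕ}

lemma measurable_coord (k : ℕ+) (x : Site d) :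
    Measurable fun ω : Config d => ω k x :=
  (measurable_pi_apply x).comp (measurable_pi_apply k)

lemma measurable_restrict (Λ : Finset (Site d)) : Measurable (restrict Λ) := by
  apply measurable_pi_lambda; intro k; apply measurable_pi_lambda; intro x
  by_cases h : x ∈ Λ
  · simpa [restrict, h] using measurable_coord k x
  · simpa [restrict, h] using (measurable_const : Measurable fun _ : Config d => (0:ℕ))

lemma measurable_shift (z : Site d) : Measurable (shift z) := by
  apply measurable_pi_lambda; intro k; apply measurable_pi_lambda; intro x
  exact measurable_coord k (x + z)

instance : MeasurableSingletonClass (Config d) := by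
  refine ⟨fun ω => ?_⟩
  have h : {ω} = ⋂ p : ℕ+ × Site d, {σ : Config d | σ p.1 p.2 = ω p.1 p.2} := by
    ext σ; simp only [Set.mem_singleton_iff, Set.mem_iInter, Set.mem_setOf_eq, Prod.forall]
    constructor
    · rintro rfl k x; rfl
    · intro h; funext k x; exact h k x
  rw [h]
  exact MeasurableSet.iInter fun p =>
    (measurable_coord p.1 p.2) (measurableSet_singleton (ω p.1 p.2))

/-- Shift as a measurable equivalence. -/
noncomputable def shiftEquiv (z : Site d) : Config d ≃ᵐ Config d where
  toEquiv := { toFun := shift z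
               invFun := shift (-z)
               left_inv := fun ω => by
                 funext k x; simp [shift, neg_add_cancel_right]
               right_inv := fun ω => by
                 funext k x; simp [shift, add_neg_cancel_right] }
  measurable_toFun := measurable_shift z
  measurable_invFun := measurable_shift (-z)

lemma restrict_comp_restrict {Λ Λ' : Finset (Site d)} (h : Λ ⊆ Λ') :
    restrict Λ ∘ restrict Λ' = restrict (d := d) Λ := by
  funext ω k x
  by_cases hx : x ∈ Λ
  · simp [restrict, hx, h hx]
  · simp [restrict, hx]

lemma restrict_comp_shift (Λ : Finset (Site d)) (z : Site d) :
    restrict Λ ∘ shift z = shift z ∘ restrict (Λ.image (· + z)) := by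
  funext ω k x
  have hmem : x + z ∈ Λ.image (· + z) ↔ x ∈ Λ := by
    constructor
    · intro h; rcases Finset.mem_image.1 h with ⟨y, hy, hyx⟩
      have : y = x := by
        have := add_right_cancel hyx; exact this
      rwa [← this]
    · intro h; exact Finset.mem_image.2 ⟨x, h, rfl⟩
  by_cases hx : x ∈ Λ
  · simp [restrict, shift, hx, hmem.2, Function.comp, hmem.mpr hx]
  · simp only [Function.comp_apply, restrict, shift]
    rw [if_neg hx, if_neg (fun hc => hx (hmem.1 hc))]

/-! ### Basic Hrel lemmas -/

section HrelBasic

variable {α : Type*} [MeasurableSpace α] [MeasurableSingletonClass α]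
variable {β : Type*} [MeasurableSpace β] [MeasurableSingletonClass β]

lemma Hrel_of_ac {μ ν : Measure α} (h : μ ≪ ν) :
    Hrel μ ν = ∑' x : α, ENNReal.ofReal (hent (ν {x}).toReal (μ {x}).toReal) := by
  rw [Hrel, if_pos h]; rfl

lemma Hrel_of_not_ac {μ ν : Measure α} (h : ¬ μ ≪ ν) : Hrel μ ν = ⊤ := by
  rw [Hrel, if_neg h]

lemma ac_map {μ ν : Measure α} (h : μ ≪ ν) {f : α → β} (hf : Measurable f) :
    μ.map f ≪ ν.map f := by
  refine Measure.AbsolutelyContinuous.mk fun s hs h0 => ?_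
  rw [Measure.map_apply hf hs] at h0 ⊢
  exact h h0

lemma map_equiv_singleton (μ : Measure α) (e : α ≃ᵐ β) (y : β) :
    μ.map e {y} = μ {e.symm y} := by
  rw [Measure.map_apply e.measurable (measurableSet_singleton y)]
  congr 1
  ext x
  simp only [Set.mem_preimage, Set.mem_singleton_iff]
  constructor
  · intro h; rw [← h]; exact (e.symm_apply_apply x).symm
  · intro h; rw [h]; exact e.apply_symm_apply y

lemma ac_map_equiv_iff {μ ν : Measure α} (e : α ≃ᵐ β) :
    μ.map e ≪ ν.map e ↔ μ ≪ ν := by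
  constructor
  · intro h
    have h2 := ac_map h e.symm.measurable
    rwa [Measure.map_map e.symm.measurable e.measurable,
      Measure.map_map e.symm.measurable e.measurable,
      show (⇑e.symm ∘ ⇑e) = id from funext fun x => e.symm_apply_apply x,
      Measure.map_id, Measure.map_id] at h2
  · intro h; exact ac_map h e.measurable

lemma Hrel_map_equiv (μ ν : Measure α) (e : α ≃ᵐ β) :
    Hrel (μ.map e) (ν.map e) = Hrel μ ν := by
  by_cases h : μ ≪ ν
  · rw [Hrel_of_ac ((ac_map_equiv_iff e).2 h), Hrel_of_ac h]
    rw [← (Equiv.tsum_eq e.symm.toEquiv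
      (fun x => ENNReal.ofReal (hent (ν {x}).toReal (μ {x}).toReal)))]
    congr 1; funext y
    rw [map_equiv_singleton μ e y, map_equiv_singleton ν e y]
    rfl
  · rw [Hrel_of_not_ac h, Hrel_of_not_ac fun hc => h ((ac_map_equiv_iff e).1 hc)]

end HrelBasic


/-! ### Mixtures of measures and convexity of Hrel -/

section Mixture

variable {α : Type*} [MeasurableSpace α] [MeasurableSingletonClass α]

lemma map_sum_smul (W : ℕ → ℝ≥0∞) (ρ : ℕ → Measure α) {β : Type*} [MeasurableSpace β]
    {f : α → β} (hf : Measurable f) :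
    (Measure.sum fun b => W b • ρ b).map f = Measure.sum fun b => W b • (ρ b).map f := by
  ext s hs
  rw [Measure.map_apply hf hs, Measure.sum_apply _ (hf hs), Measure.sum_apply _ hs]
  congr 1; funext b
  rw [Measure.smul_apply, Measure.smul_apply, Measure.map_apply hf hs]

lemma sum_smul_singleton (W : ℕ → ℝ≥0∞) (ρ : ℕ → Measure α) (x : α) :
    (Measure.sum fun b => W b • ρ b) {x} = ∑' b, W b * ρ b {x} := by
  rw [Measure.sum_apply _ (measurableSet_singleton x)]
  simp [Measure.smul_apply]

/-- Countable convexity of relative entropy in its first argument. -/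
lemma Hrel_sum_le (ν : Measure α) [IsProbabilityMeasure ν]
    (W : ℕ → ℝ≥0∞) (hW : ∑' b, W b = 1)
    (ρ : ℕ → Measure α) (hρ : ∀ b, IsProbabilityMeasure (ρ b)) :
    Hrel (Measure.sum fun b => W b • ρ b) ν ≤ ∑' b, W b * Hrel (ρ b) ν := by
  have hWle : ∀ b, W b ≤ 1 := fun b => hW ▸ ENNReal.le_tsum b
  have hWtop : ∀ b, W b ≠ ⊤ := fun b => ne_top_of_le_ne_top ENNReal.one_ne_top (hWle b)
  by_cases hac : ∀ b, W b ≠ 0 → ρ b ≪ ν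
  · -- main case
    have hmix_ac : (Measure.sum fun b => W b • ρ b) ≪ ν := by
      refine Measure.AbsolutelyContinuous.mk fun s hs h0 => ?_
      rw [Measure.sum_apply _ hs]
      rw [ENNReal.tsum_eq_zero]
      intro b
      rw [Measure.smul_apply, smul_eq_mul]
      rcases eq_or_ne (W b) 0 with h | h
      · rw [h, zero_mul]
      · rw [hac b h h0, mul_zero]
    rw [Hrel_of_ac hmix_ac]
    have key : ∀ x : α,
        ENNReal.ofReal (hent (ν {x}).toReal
          ((Measure.sum fun b => W b • ρ b) {x}).toReal)
        ≤ ∑' b, W b * ENNReal.ofReal (hent (ν {x}).toReal ((ρ b) {x}).toReal) := by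
      intro x
      have hmass : ∀ b, ρ b {x} ≤ 1 := fun b => prob_le_one
      have hterm_top : ∀ b, W b * ρ b {x} ≠ ⊤ :=
        fun b => ENNReal.mul_ne_top (hWtop b) (ne_top_of_le_ne_top ENNReal.one_ne_top (hmass b))
      have hfin : (∑' b, W b * ρ b {x}) ≤ 1 := by
        calc (∑' b, W b * ρ b {x}) ≤ ∑' b, W b * 1 :=
              ENNReal.tsum_le_tsum fun b => mul_le_mul' le_rfl (hmass b)
          _ = 1 := by simpa using hW
      have hfin' : (∑' b, W b * ρ b {x}) ≠ ⊤ :=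
        ne_top_of_le_ne_top ENNReal.one_ne_top hfin
      set w : ℕ → ℝ := fun b => (W b).toReal
      set t : ℕ → ℝ := fun b => ((ρ b) {x}).toReal
      have hw : ∀ b, 0 ≤ w b := fun b => ENNReal.toReal_nonneg
      have ht : ∀ b, 0 ≤ t b := fun b => ENNReal.toReal_nonneg
      have hws : Summable w := ENNReal.summable_toReal (hW ▸ ENNReal.one_ne_top)
      have hw1 : ∑' b, w b = 1 := by
        rw [← ENNReal.tsum_toReal_eq hWtop, hW, ENNReal.toReal_one]
      have hwt_eq : ∀ b, (W b * ρ b {x}).toReal = w b * t b := by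
        intro b; rw [ENNReal.toReal_mul]
      have hwt : Summable fun b => w b * t b := by
        have := ENNReal.summable_toReal hfin'
        simpa [hwt_eq] using this
      have hT : ((Measure.sum fun b => W b • ρ b) {x}).toReal = ∑' b, w b * t b := by
        rw [sum_smul_singleton, ENNReal.tsum_toReal_eq hterm_top]
        exact tsum_congr hwt_eq
      have hzero : (ν {x}).toReal = 0 → ∀ b, w b * t b = 0 := by
        intro hc b
        have hν0 : ν {x} = 0 := by
          rcases (ENNReal.toReal_eq_zero_iff _).1 hc with h | h
          · exact h
          · exact absurd h (measure_ne_top ν _)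
        rcases eq_or_ne (W b) 0 with h | h
        · simp only [w, h, ENNReal.toReal_zero, zero_mul]
        · have : ρ b {x} = 0 := hac b h hν0
          simp only [t, this, ENNReal.toReal_zero, mul_zero]
      have := key_convex (c := (ν {x}).toReal) ENNReal.toReal_nonneg w t hw ht hws hw1 hwt hzero
      rw [hT]
      refine le_trans this ?_
      refine ENNReal.tsum_le_tsum fun b => ?_
      rw [ENNReal.ofReal_toReal (hWtop b)]
    calc (∑' x : α, ENNReal.ofReal (hent (ν {x}).toReal
            ((Measure.sum fun b => W b • ρ b) {x}).toReal))
        ≤ ∑' x : α, ∑' b, W b * ENNReal.ofReal (hent (ν {x}).toReal ((ρ b) {x}).toReal) :=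
          ENNReal.tsum_le_tsum key
      _ = ∑' b, ∑' x : α, W b * ENNReal.ofReal (hent (ν {x}).toReal ((ρ b) {x}).toReal) :=
          ENNReal.tsum_comm
      _ = ∑' b, W b * ∑' x : α, ENNReal.ofReal (hent (ν {x}).toReal ((ρ b) {x}).toReal) := by
          congr 1; funext b; rw [ENNReal.tsum_mul_left]
      _ ≤ ∑' b, W b * Hrel (ρ b) ν := by
          refine ENNReal.tsum_le_tsum fun b => ?_
          rcases eq_or_ne (W b) 0 with h | h
          · simp [h]
          · rw [Hrel_of_ac (hac b h)]
  · -- some component not absolutely continuous : RHS = ⊤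
    push_neg at hac
    obtain ⟨b₀, hWb₀, hnac⟩ := hac
    have : (∑' b, W b * Hrel (ρ b) ν) = ⊤ := by
      refine eq_top_iff.2 (le_trans ?_ (ENNReal.le_tsum b₀))
      rw [Hrel_of_not_ac hnac, ENNReal.mul_top hWb₀]
    rw [this]; exact le_top

end Mixture


/-! ### Monotone coupling from stochastic domination -/

section Coupling

/-- Partial sums of a `PMF` on `ℕ`. -/
noncomputable def PS (ψ : PMF ℕ) (a : ℕ) : ℝ≥0∞ := ∑ b ∈ Finset.range a, ψ b

noncomputable def psR (ψ : PMF ℕ) (a : ℕ) : ℝ := (PS ψ a).toReal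

/-- The quantile interval of `ψ` at `a`. -/
noncomputable def Iv (ψ : PMF ℕ) (a : ℕ) : Set ℝ := Set.Ico (psR ψ a) (psR ψ (a + 1))

lemma PS_le_one (ψ : PMF ℕ) (a : ℕ) : PS ψ a ≤ 1 := by
  rw [← ψ.tsum_coe]
  exact Summable.sum_le_tsum _ (fun b _ => zero_le) ENNReal.summable

lemma PS_ne_top (ψ : PMF ℕ) (a : ℕ) : PS ψ a ≠ ⊤ :=
  ne_top_of_le_ne_top ENNReal.one_ne_top (PS_le_one ψ a)

lemma PS_mono (ψ : PMF ℕ) : Monotone (PS ψ) := fun a b hab =>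
  Finset.sum_le_sum_of_subset (Finset.range_subset_range.2 hab)

lemma PS_succ (ψ : PMF ℕ) (a : ℕ) : PS ψ (a + 1) = PS ψ a + ψ a :=
  Finset.sum_range_succ _ _

lemma psR_nonneg (ψ : PMF ℕ) (a : ℕ) : 0 ≤ psR ψ a := ENNReal.toReal_nonneg

lemma psR_mono (ψ : PMF ℕ) {a b : ℕ} (h : a ≤ b) : psR ψ a ≤ psR ψ b :=
  ENNReal.toReal_mono (PS_ne_top ψ b) (PS_mono ψ h)

lemma psR_le_one (ψ : PMF ℕ) (a : ℕ) : psR ψ a ≤ 1 := by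
  have := ENNReal.toReal_mono ENNReal.one_ne_top (PS_le_one ψ a)
  simpa [psR] using this

lemma psR_zero (ψ : PMF ℕ) : psR ψ 0 = 0 := by simp [psR, PS]

lemma psR_tendsto (ψ : PMF ℕ) : Tendsto (psR ψ) atTop (nhds 1) := by
  have h1 : Tendsto (PS ψ) atTop (nhds 1) := by
    have := ENNReal.tendsto_nat_tsum (fun b => ψ b)
    rwa [ψ.tsum_coe] at this
  have h2 := (ENNReal.tendsto_toReal ENNReal.one_ne_top).comp h1
  rw [ENNReal.toReal_one] at h2; exact h2

lemma volume_Iv (ψ : PMF ℕ) (a : ℕ) : volume (Iv ψ a) = ψ a := by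
  rw [Iv, Real.volume_Ico]
  have h1 : psR ψ (a + 1) - psR ψ a = (PS ψ (a + 1) - PS ψ a).toReal := by
    rw [ENNReal.toReal_sub_of_le (PS_mono ψ (Nat.le_succ a)) (PS_ne_top ψ (a + 1))]
    rfl
  rw [h1, PS_succ, ENNReal.add_sub_cancel_left (PS_ne_top ψ a),
    ENNReal.ofReal_toReal]
  exact ψ.apply_ne_top a

lemma Iv_subset (ψ : PMF ℕ) (a : ℕ) : Iv ψ a ⊆ Set.Ico (0:ℝ) 1 := by
  rintro x ⟨h1, h2⟩
  exact ⟨le_trans (psR_nonneg ψ a) h1, lt_of_lt_of_le h2 (psR_le_one ψ (a + 1))⟩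

lemma Iv_mem (ψ : PMF ℕ) {x : ℝ} (h0 : 0 ≤ x) (h1 : x < 1) : ∃ b, x ∈ Iv ψ b := by
  have hev : ∃ n, x < psR ψ n := by
    have : ∀ᶠ n in atTop, x < psR ψ n :=
      (psR_tendsto ψ).eventually (eventually_gt_nhds h1)
    exact this.exists
  classical
  have hspec : x < psR ψ (Nat.find hev) := Nat.find_spec hev
  have hN0 : Nat.find hev ≠ 0 := by
    intro h
    rw [h, psR_zero] at hspec
    exact absurd hspec (not_lt.2 h0)
  obtain ⟨b, hb⟩ := Nat.exists_eq_succ_of_ne_zero hN0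
  rw [hb] at hspec
  refine ⟨b, ?_, hspec⟩
  by_contra hc
  push_neg at hc
  exact (Nat.find_min hev (hb ▸ Nat.lt_succ_self b)) hc

lemma Iv_disjoint (ψ : PMF ℕ) : Pairwise (Function.onFun Disjoint (Iv ψ)) := by
  intro a b hab
  wlog h : a < b generalizing a b
  · exact (this hab.symm (by omega)).symm
  refine Set.disjoint_left.2 fun x hx hx' => ?_
  have h1 : x < psR ψ (a + 1) := hx.2
  have h2 : psR ψ b ≤ x := hx'.1
  have := psR_mono ψ (show a + 1 ≤ b by omega)
  linarith

lemma measurableSet_Iv (ψ : PMF ℕ) (a : ℕ) : MeasurableSet (Iv ψ a) := measurableSet_Ico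

/-- Intersecting a measurable subset of `[0,1)` with all quantile intervals exhausts it. -/
lemma tsum_volume_inter (ψ : PMF ℕ) (s : Set ℝ) (hs : MeasurableSet s)
    (hsub : s ⊆ Set.Ico (0:ℝ) 1) :
    ∑' b, volume (s ∩ Iv ψ b) = volume s := by
  have hdisj : Pairwise (Function.onFun Disjoint fun b => s ∩ Iv ψ b) := by
    intro a b hab
    exact ((Iv_disjoint ψ hab).mono (Set.inter_subset_right) (Set.inter_subset_right))
  have hmeas : ∀ b, MeasurableSet (s ∩ Iv ψ b) := fun b => hs.inter (measurableSet_Iv ψ b)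
  rw [← measure_iUnion hdisj hmeas]
  congr 1
  rw [← Set.inter_iUnion]
  refine Set.inter_eq_left.2 fun x hx => ?_
  obtain ⟨h0, h1⟩ := hsub hx
  obtain ⟨b, hb⟩ := Iv_mem ψ h0 h1
  exact Set.mem_iUnion.2 ⟨b, hb⟩

/-- Existence of a monotone coupling of two stochastically ordered PMFs on `ℕ`. -/
lemma exists_coupling (ψ ψ' : PMF ℕ)
    (hst : ∀ a : ℕ, (∑' b, if a ≤ b then ψ b else 0) ≤ ∑' b, if a ≤ b then ψ' b else 0) :
    ∃ π : ℕ → ℕ → ℝ≥0∞, (∀ a, ∑' b, π a b = ψ a) ∧ (∀ b, ∑' a, π a b = ψ' b) ∧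
      ∀ a b, b < a → π a b = 0 := by
  -- partial-sum dominance
  have hps : ∀ a, PS ψ' a ≤ PS ψ a := by
    intro a
    have hsplit : ∀ (φ : PMF ℕ), PS φ a + (∑' b, if a ≤ b then φ b else 0) = 1 := by
      intro φ
      have : ∀ b, (if b < a then φ b else 0) + (if a ≤ b then φ b else 0) = φ b := by
        intro b
        rcases lt_or_ge b a with h | h
        · rw [if_pos h, if_neg (not_le.2 h), add_zero]
        · rw [if_neg (not_lt.2 h), if_pos h, zero_add]
      have h2 : PS φ a = ∑' b, if b < a then φ b else 0 := by
        rw [tsum_eq_sum (s := Finset.range a)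
          (fun b hb => if_neg fun h => hb (Finset.mem_range.2 h))]
        exact Finset.sum_congr rfl fun b hb => (if_pos (Finset.mem_range.1 hb)).symm
      rw [h2, ← ENNReal.tsum_add, tsum_congr this, φ.tsum_coe]
    have h1 := hsplit ψ
    have h2 := hsplit ψ'
    have hne : (∑' b, if a ≤ b then ψ b else 0) ≠ ⊤ := by
      intro hc; rw [hc, add_top] at h1; exact ENNReal.one_ne_top h1.symm
    have hne' : (∑' b, if a ≤ b then ψ' b else 0) ≠ ⊤ := by
      intro hc; rw [hc, add_top] at h2; exact ENNReal.one_ne_top h2.symm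
    have e1 : PS ψ a = 1 - (∑' b, if a ≤ b then ψ b else 0) :=
      ENNReal.eq_sub_of_add_eq hne h1
    have e2 : PS ψ' a = 1 - (∑' b, if a ≤ b then ψ' b else 0) :=
      ENNReal.eq_sub_of_add_eq hne' h2
    rw [e1, e2]
    exact tsub_le_tsub_left (hst a) 1
  have hpsR : ∀ a, psR ψ' a ≤ psR ψ a := fun a =>
    ENNReal.toReal_mono (PS_ne_top ψ a) (hps a)
  refine ⟨fun a b => volume (Iv ψ a ∩ Iv ψ' b), fun a => ?_, fun b => ?_, fun a b hba => ?_⟩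
  · rw [tsum_volume_inter ψ' (Iv ψ a) (measurableSet_Iv ψ a) (Iv_subset ψ a)]
    exact volume_Iv ψ a
  · have : ∀ a, volume (Iv ψ a ∩ Iv ψ' b) = volume (Iv ψ' b ∩ Iv ψ a) := by
      intro a; rw [Set.inter_comm]
    rw [tsum_congr this,
      tsum_volume_inter ψ (Iv ψ' b) (measurableSet_Iv ψ' b) (Iv_subset ψ' b)]
    exact volume_Iv ψ' b
  · show volume (Iv ψ a ∩ Iv ψ' b) = 0
    have : Iv ψ a ∩ Iv ψ' b = ∅ := by
      refine Set.eq_empty_iff_forall_notMem.2 fun x ⟨hx, hx'⟩ => ?_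
      have h1 : psR ψ a ≤ x := hx.1
      have h2 : x < psR ψ' (b + 1) := hx'.2
      have h3 : psR ψ' (b + 1) ≤ psR ψ (b + 1) := hpsR (b + 1)
      have h4 : psR ψ (b + 1) ≤ psR ψ a := psR_mono ψ (by omega)
      linarith
    rw [this, measure_empty]

end Coupling


/-! ### Cylinder sets and the structure of the reference measure -/

section Cylinders

/-- Finite cylinder event. -/
def cyl (F : Finset (ℕ+ × Site d)) (n : ℕ+ × Site d → ℕ) : Set (Config d) :=
  {σ | ∀ p ∈ F, σ p.1 p.2 = n p}

lemma cyl_eq_iInter (F : Finset (ℕ+ × Site d)) (n : ℕ+ × Site d → ℕ) :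
    cyl F n = ⋂ p ∈ F, (fun σ : Config d => σ p.1 p.2) ⁻¹' {n p} := by
  ext σ; simp [cyl]

lemma measurableSet_cyl (F : Finset (ℕ+ × Site d)) (n : ℕ+ × Site d → ℕ) :
    MeasurableSet (cyl F n) := by
  rw [cyl_eq_iInter]
  exact MeasurableSet.biInter F.countable_toSet fun p _ =>
    (measurable_coord p.1 p.2) (measurableSet_singleton (n p))

/-- The collection of cylinder events. -/
def cylSets (d : ℕ) : Set (Set (Config d)) := {S | ∃ F n, S = cyl (d := d) F n}

lemma isPiSystem_cylSets : IsPiSystem (cylSets d) := by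
  rintro s ⟨F, n, rfl⟩ t ⟨G, m, rfl⟩ hne
  obtain ⟨σ₀, hσF, hσG⟩ := hne
  refine ⟨F ∪ G, fun p => if p ∈ F then n p else m p, ?_⟩
  ext σ
  simp only [cyl, Set.mem_setOf_eq, Set.mem_inter_iff]
  constructor
  · rintro ⟨h1, h2⟩ p hp
    rcases Finset.mem_union.1 hp with h | h
    · rw [if_pos h]; exact h1 p h
    · by_cases hF : p ∈ F
      · rw [if_pos hF]; exact h1 p hF
      · rw [if_neg hF]; exact h2 p h
  · intro h
    constructor
    · intro p hp
      have := h p (Finset.mem_union_left _ hp)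
      rwa [if_pos hp] at this
    · intro p hp
      have := h p (Finset.mem_union_right _ hp)
      by_cases hF : p ∈ F
      · rw [if_pos hF] at this
        rw [this, ← hσF p hF, hσG p hp]
      · rwa [if_neg hF] at this

lemma generateFrom_cylSets :
    (inferInstance : MeasurableSpace (Config d)) =
      MeasurableSpace.generateFrom (cylSets d) := by
  refine le_antisymm ?_ ?_
  · -- pi σ-algebra ≤ generated by cylinders
    have hcoord : ∀ (k : ℕ+) (x : Site d) (A : Set ℕ),
        MeasurableSet[MeasurableSpace.generateFrom (cylSets d)]
          ((fun σ : Config d => σ k x) ⁻¹' A) := by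
      intro k x A
      have : (fun σ : Config d => σ k x) ⁻¹' A = ⋃ v ∈ A, cyl {(k, x)} (fun _ => v) := by
        ext σ; simp [cyl]
      rw [this]
      exact MeasurableSet.biUnion A.to_countable fun v _ =>
        MeasurableSpace.measurableSet_generateFrom ⟨{(k, x)}, fun _ => v, rfl⟩
    have : (inferInstance : MeasurableSpace (Config d)) =
        ⨆ k : ℕ+, ⨆ x : Site d,
          MeasurableSpace.comap (fun σ : Config d => σ k x) ⊤ := by
      show MeasurableSpace.pi = _
      unfold MeasurableSpace.pi
      congr 1
      funext k
      show MeasurableSpace.comap _ MeasurableSpace.pi = _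
      unfold MeasurableSpace.pi
      rw [MeasurableSpace.comap_iSup]
      congr 1
      funext x
      rw [MeasurableSpace.comap_comp]
      rfl
    rw [this]
    refine iSup_le fun k => iSup_le fun x => ?_
    intro s hs
    obtain ⟨A, -, rfl⟩ := hs
    exact hcoord k x A
  · refine MeasurableSpace.generateFrom_le ?_
    rintro s ⟨F, n, rfl⟩
    exact measurableSet_cyl F n

end Cylinders

section RefFacts

variable (M : Model d)

lemma ref_prob : IsProbabilityMeasure M.ref := M.href.1

/-- Cylinder probabilities of the reference Poisson field. -/
lemma ref_cyl (F : Finset (ℕ+ × Site d)) (n : ℕ+ × Site d → ℕ) :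
    M.ref (cyl F n) = ∏ p ∈ F, poissonMeasure (M.q p.1) {n p} := by
  obtain ⟨hprob, hindep, hmarg⟩ := M.href
  have h := (ProbabilityTheory.iIndepFun_iff_measure_inter_preimage_eq_mul.1 hindep) F
    (sets := fun p => {n p}) (fun p _ => measurableSet_singleton _)
  rw [cyl_eq_iInter, h]
  refine Finset.prod_congr rfl fun p _ => ?_
  rw [← hmarg p.1 p.2,
    Measure.map_apply (measurable_coord p.1 p.2) (measurableSet_singleton _)]

/-- Shift invariance of the reference measure. -/
lemma ref_shift_invariant (z : Site d) : M.ref.map (shift z) = M.ref := by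
  have hprob : IsProbabilityMeasure M.ref := M.href.1
  have hprob2 : IsProbabilityMeasure (M.ref.map (shift z)) :=
    Measure.isProbabilityMeasure_map (measurable_shift z).aemeasurable
  refine ext_of_generate_finite (cylSets d) generateFrom_cylSets isPiSystem_cylSets ?_ ?_
  · rintro s ⟨F, n, rfl⟩
    rw [Measure.map_apply (measurable_shift z) (measurableSet_cyl F n)]
    have hpre : shift z ⁻¹' cyl F n =
        cyl (F.image fun p => (p.1, p.2 + z)) fun p => n (p.1, p.2 - z) := by
      ext σ
      simp only [cyl, Set.mem_preimage, Set.mem_setOf_eq, shift]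
      constructor
      · intro h q hq
        obtain ⟨p, hp, rfl⟩ := Finset.mem_image.1 hq
        simpa [add_sub_cancel_right] using h p hp
      · intro h p hp
        have := h (p.1, p.2 + z) (Finset.mem_image.2 ⟨p, hp, rfl⟩)
        simpa [add_sub_cancel_right] using this
    rw [hpre, ref_cyl, ref_cyl]
    rw [Finset.prod_image ?inj]
    · refine Finset.prod_congr rfl fun p _ => ?_
      simp [add_sub_cancel_right]
    case inj =>
      intro p _ q _ h
      injection h with h1 h2
      exact Prod.ext h1 (add_right_cancel h2)
  · simp [measure_univ]

lemma poisson_singleton_zero (r : ℝ≥0) :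
    poissonMeasure r {0} = ENNReal.ofReal (Real.exp (-(r:ℝ))) := by
  rw [poissonMeasure_singleton]
  simp

lemma poisson_compl_zero_le (r : ℝ≥0) : poissonMeasure r {(0:ℕ)}ᶜ ≤ (r : ℝ≥0∞) := by
  have h1 : poissonMeasure r {(0:ℕ)}ᶜ = 1 - poissonMeasure r {0} :=
    prob_compl_eq_one_sub (measurableSet_singleton 0)
  rw [h1, poisson_singleton_zero]
  rw [tsub_le_iff_right]
  have h2 : (1:ℝ) ≤ (r:ℝ) + Real.exp (-(r:ℝ)) := by
    have := Real.add_one_le_exp (-(r:ℝ))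
    linarith
  calc (1:ℝ≥0∞) = ENNReal.ofReal 1 := by simp
    _ ≤ ENNReal.ofReal ((r:ℝ) + Real.exp (-(r:ℝ))) := ENNReal.ofReal_le_ofReal h2
    _ = ENNReal.ofReal (r:ℝ) + ENNReal.ofReal (Real.exp (-(r:ℝ))) :=
        ENNReal.ofReal_add r.coe_nonneg (Real.exp_nonneg _)
    _ = (r : ℝ≥0∞) + ENNReal.ofReal (Real.exp (-(r:ℝ))) := by
        rw [ENNReal.ofReal_coe_nnreal]

/-- The reference marginal in a finite window is carried by a countable set. -/
lemma ref_support (Λ : Finset (Site d)) :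
    ∃ C : Set (Config d), C.Countable ∧ (M.ref.map (restrict Λ)) Cᶜ = 0 ∧
      ∀ ω ∈ C, restrict Λ ω = ω := by
  classical
  set Cfin : Set (Config d) :=
    {ω | restrict Λ ω = ω ∧ Set.Finite {p : ℕ+ × Site d | ω p.1 p.2 ≠ 0}} with hCfin
  have hcount : Cfin.Countable := by
    have hsub : Cfin ⊆ ⋃ F : Finset (ℕ+ × Site d),
        {ω : Config d | ∀ p : ℕ+ × Site d, ω p.1 p.2 ≠ 0 → p ∈ F} := by
      rintro ω ⟨-, hfin⟩
      exact Set.mem_iUnion.2 ⟨hfin.toFinset, fun p hp => hfin.mem_toFinset.2 hp⟩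
    refine Set.Countable.mono hsub (Set.countable_iUnion fun F => ?_)
    rw [← Set.countable_coe_iff]
    have hinj : Function.Injective
        (fun (ω : {ω : Config d | ∀ p : ℕ+ × Site d, ω p.1 p.2 ≠ 0 → p ∈ F})
          (p : {p : ℕ+ × Site d // p ∈ F}) => (ω : Config d) p.1.1 p.1.2) := by
      intro ω1 ω2 h
      ext1
      funext k x
      by_cases hx : (k, x) ∈ F
      · exact congrFun h ⟨(k, x), hx⟩
      · have h1 : (ω1 : Config d) k x = 0 := by
          by_contra hc; exact hx (ω1.2 (k, x) hc)
        have h2 : (ω2 : Config d) k x = 0 := by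
          by_contra hc; exact hx (ω2.2 (k, x) hc)
        rw [h1, h2]
    exact hinj.countable
  refine ⟨Cfin, hcount, ?_, fun ω hω => hω.1⟩
  rw [Measure.map_apply (measurable_restrict Λ) hcount.measurableSet.compl]
  -- the pullback of the complement consists of configurations with infinitely many
  -- nonzero coordinates over Λ
  set bad : Set (Config d) :=
    {σ | Set.Infinite {p : ℕ+ × ↥Λ | σ p.1 (p.2 : Site d) ≠ 0}} with hbad
  have hsub : restrict Λ ⁻¹' Cfinᶜ ⊆ bad := by
    intro σ hσ
    simp only [Set.mem_preimage, Set.mem_compl_iff, hCfin, Set.mem_setOf_eq] at hσ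
    have hidem : restrict Λ (restrict Λ σ) = restrict Λ σ :=
      congrFun (restrict_comp_restrict (le_refl Λ)) σ
    have hinf : Set.Infinite {p : ℕ+ × Site d | restrict Λ σ p.1 p.2 ≠ 0} := by
      by_contra hc
      rw [Set.not_infinite] at hc
      exact hσ ⟨hidem, hc⟩
    have hmap : {p : ℕ+ × Site d | restrict Λ σ p.1 p.2 ≠ 0} ⊆
        (fun p : ℕ+ × ↥Λ => ((p.1 : ℕ+), (p.2 : Site d))) ''
          {p : ℕ+ × ↥Λ | σ p.1 (p.2 : Site d) ≠ 0} := by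
      rintro ⟨k, x⟩ hp
      simp only [Set.mem_setOf_eq, restrict] at hp
      by_cases hx : x ∈ Λ
      · rw [if_pos hx] at hp
        exact ⟨(k, ⟨x, hx⟩), hp, rfl⟩
      · rw [if_neg hx] at hp; exact absurd rfl hp
    exact Set.Infinite.mono hmap hinf |>.of_image _
  refine measure_mono_null hsub ?_
  -- Borel–Cantelli
  rcases Finset.eq_empty_or_nonempty Λ with hΛ | hΛ
  · have : bad = ∅ := by
      refine Set.eq_empty_iff_forall_notMem.2 fun σ hσ => ?_
      have : {p : ℕ+ × ↥Λ | σ p.1 (p.2 : Site d) ≠ 0} ⊆ ∅ := by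
        rintro ⟨k, ⟨x, hx⟩⟩ -
        rw [hΛ] at hx
        exact absurd hx (Finset.notMem_empty x)
      exact hσ (Set.Finite.subset Set.finite_empty this)
    rw [this]; exact measure_empty
  · have hne : Nonempty ↥Λ := ⟨⟨hΛ.choose, hΛ.choose_spec⟩⟩
    have hinfty : Infinite (ℕ+ × ↥Λ) := Prod.infinite_of_left
    have henc : Encodable (ℕ+ × ↥Λ) := Encodable.ofCountable _
    have hdenum : Denumerable (ℕ+ × ↥Λ) := Denumerable.ofEncodableOfInfinite _
    set e : ℕ ≃ (ℕ+ × ↥Λ) := (Denumerable.eqv (ℕ+ × ↥Λ)).symm with he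
    set s : ℕ → Set (Config d) := fun i => {σ | σ (e i).1 ((e i).2 : Site d) ≠ 0} with hs
    have hbound : ∀ i, M.ref (s i) ≤ (M.q (e i).1 : ℝ≥0∞) := by
      intro i
      have h1 : s i = (fun σ : Config d => σ (e i).1 ((e i).2 : Site d)) ⁻¹' {(0:ℕ)}ᶜ := by
        ext σ; simp [hs]
      rw [h1, ← Measure.map_apply (measurable_coord _ _) (measurableSet_singleton 0).compl,
        M.href.2.2 (e i).1 ((e i).2 : Site d)]
      exact poisson_compl_zero_le _
    have hsum : ∑' i, M.ref (s i) ≠ ⊤ := by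
      have h2 : (∑' i, (M.q (e i).1 : ℝ≥0∞)) = ∑' p : ℕ+ × ↥Λ, (M.q p.1 : ℝ≥0∞) := by
        simpa using e.tsum_eq (fun p : ℕ+ × ↥Λ => (M.q p.1 : ℝ≥0∞))
      have h3 : (∑' p : ℕ+ × ↥Λ, (M.q p.1 : ℝ≥0∞)) =
          ∑' k : ℕ+, ∑' _x : ↥Λ, (M.q k : ℝ≥0∞) :=
        ENNReal.tsum_prod (f := fun k (_ : ↥Λ) => (M.q k : ℝ≥0∞))
      have h4 : ∀ k : ℕ+, (∑' _x : ↥Λ, (M.q k : ℝ≥0∞)) = (Λ.card : ℝ≥0∞) * M.q k := by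
        intro k
        rw [tsum_fintype]
        simp [Finset.sum_const, nsmul_eq_mul]
      have h5 : (∑' k : ℕ+, (M.q k : ℝ≥0∞)) ≠ ⊤ :=
        ENNReal.tsum_coe_ne_top_iff_summable.2 M.hq_sum
      have h6 : (∑' i, (M.q (e i).1 : ℝ≥0∞)) ≠ ⊤ := by
        rw [h2, h3]
        rw [tsum_congr h4, ENNReal.tsum_mul_left]
        exact ENNReal.mul_ne_top (by simp) h5
      exact fun hc => h6 (eq_top_iff.2 (hc ▸ ENNReal.tsum_le_tsum hbound))
    have hBC : M.ref (limsup s atTop) = 0 := measure_limsup_atTop_eq_zero hsum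
    refine measure_mono_null ?_ hBC
    intro σ hσ
    rw [hbad, Set.mem_setOf_eq] at hσ
    have hIinf : Set.Infinite {i : ℕ | σ ∈ s i} := by
      have : {i : ℕ | σ ∈ s i} = e ⁻¹' {p : ℕ+ × ↥Λ | σ p.1 (p.2 : Site d) ≠ 0} := by
        ext i; simp [hs]
      rw [this]
      exact Set.Infinite.preimage hσ (by intro p _; exact ⟨e.symm p, e.apply_symm_apply p⟩)
    have hfreq : ∃ᶠ i in atTop, σ ∈ s i := Nat.frequently_atTop_iff_infinite.2 hIinf
    exact mem_limsup_iff_frequently_mem.2 hfreq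

end RefFacts

section RefFactor

lemma restrict_idem (Λ : Finset (Site d)) (ω : Config d) :
    restrict Λ (restrict Λ ω) = restrict Λ ω :=
  congrFun (restrict_comp_restrict (le_refl Λ)) ω

lemma map_restrict_restrict (μ : Measure (Config d)) {Λ Λ' : Finset (Site d)} (h : Λ ⊆ Λ') :
    (μ.map (restrict Λ')).map (restrict Λ) = μ.map (restrict Λ) := by
  rw [Measure.map_map (measurable_restrict Λ) (measurable_restrict Λ'),
    restrict_comp_restrict h]

lemma restrict_preimage_singleton (B : Finset (Site d)) (ω : Config d)
    (hω : restrict B ω = ω) :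
    restrict B ⁻¹' {ω} = {σ : Config d | ∀ (k : ℕ+), ∀ x ∈ B, σ k x = ω k x} := by
  ext σ
  simp only [Set.mem_preimage, Set.mem_singleton_iff, Set.mem_setOf_eq]
  constructor
  · intro h k x hx
    have := congrFun (congrFun h k) x
    simpa [restrict, hx] using this
  · intro h
    funext k x
    by_cases hx : x ∈ B
    · simp only [restrict, if_pos hx]
      exact h k x hx
    · have h0 : ω k x = 0 := by
        have := congrFun (congrFun hω k) x
        simpa [restrict, hx] using this.symm
      simp only [restrict, if_neg hx]
      exact h0.symm

/-- Truncation of the mark index set. -/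
def Ktr (m : ℕ) : Finset ℕ+ := (Finset.range m).image fun i => (⟨i + 1, Nat.succ_pos i⟩ : ℕ+)

lemma mem_Ktr {k : ℕ+} {m : ℕ} (h : (k : ℕ) ≤ m) : k ∈ Ktr m := by
  refine Finset.mem_image.2 ⟨(k : ℕ) - 1, Finset.mem_range.2 (by
    have := k.pos; omega), ?_⟩
  have hk := k.pos
  refine PNat.eq ?_
  show (k : ℕ) - 1 + 1 = k
  omega

lemma Ktr_mono : Monotone Ktr := by
  intro m m' h
  refine Finset.image_subset_iff.2 fun i hi => ?_
  exact Finset.mem_image.2 ⟨i, Finset.mem_range.2 (lt_of_lt_of_le (Finset.mem_range.1 hi) h), rfl⟩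

variable (M : Model d)

/-- Cylinder approximation of marginal singletons. -/
lemma ref_tendsto_cyl (ω : Config d) (B : Finset (Site d)) (ω₀ : Config d)
    (h0 : restrict B ω₀ = ω₀) (hvals : ∀ (k : ℕ+), ∀ x ∈ B, ω₀ k x = ω k x) :
    Tendsto (fun m => M.ref (cyl (Ktr m ×ˢ B) fun p => ω p.1 p.2)) atTop
      (nhds ((M.ref.map (restrict B)) {ω₀})) := by
  have hpre : restrict B ⁻¹' {ω₀} = ⋂ m, cyl (Ktr m ×ˢ B) fun p => ω p.1 p.2 := by
    rw [restrict_preimage_singleton B ω₀ h0]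
    ext σ
    simp only [Set.mem_iInter, cyl, Set.mem_setOf_eq]
    constructor
    · intro h m p hp
      obtain ⟨hk, hx⟩ := Finset.mem_product.1 hp
      rw [h p.1 p.2 hx]
      exact hvals p.1 p.2 hx
    · intro h k x hx
      have := h (k : ℕ) (k, x) (Finset.mem_product.2 ⟨mem_Ktr (le_refl _), hx⟩)
      exact this.trans (hvals k x hx).symm
  have hanti : Antitone fun m => cyl (Ktr m ×ˢ B) fun p => ω p.1 p.2 := by
    intro m m' h σ hσ p hp
    obtain ⟨hk, hx⟩ := Finset.mem_product.1 hp
    exact hσ p (Finset.mem_product.2 ⟨Ktr_mono h hk, hx⟩)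
  have hprob : IsProbabilityMeasure M.ref := M.href.1
  have htend := tendsto_measure_iInter_atTop (μ := M.ref)
    (fun m => (measurableSet_cyl _ _).nullMeasurableSet) hanti ⟨0, measure_ne_top _ _⟩
  rw [← hpre] at htend
  rw [Measure.map_apply (measurable_restrict B) (measurableSet_singleton _)]
  exact htend

/-- Factorization of singleton masses of the reference marginals over disjoint windows. -/
lemma ref_factor {Λ Λ' : Finset (Site d)} (hdisj : Disjoint Λ Λ') (ω : Config d)
    (hω : restrict (Λ ∪ Λ') ω = ω) :
    (M.ref.map (restrict (Λ ∪ Λ'))) {ω}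
      = (M.ref.map (restrict Λ)) {restrict Λ ω}
        * (M.ref.map (restrict Λ')) {restrict Λ' ω} := by
  classical
  have h1 := ref_tendsto_cyl M ω (Λ ∪ Λ') ω hω (fun k x hx => rfl)
  have h2 := ref_tendsto_cyl M ω Λ (restrict Λ ω) (restrict_idem Λ ω)
    (fun k x hx => by simp [restrict, hx])
  have h3 := ref_tendsto_cyl M ω Λ' (restrict Λ' ω) (restrict_idem Λ' ω)
    (fun k x hx => by simp [restrict, hx])
  have hsplit : ∀ m, M.ref (cyl (Ktr m ×ˢ (Λ ∪ Λ')) fun p => ω p.1 p.2)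
      = M.ref (cyl (Ktr m ×ˢ Λ) fun p => ω p.1 p.2)
        * M.ref (cyl (Ktr m ×ˢ Λ') fun p => ω p.1 p.2) := by
    intro m
    rw [ref_cyl, ref_cyl, ref_cyl]
    have hunion : Ktr m ×ˢ (Λ ∪ Λ') = (Ktr m ×ˢ Λ) ∪ (Ktr m ×ˢ Λ') := by
      ext p; simp [Finset.mem_product, Finset.mem_union, and_or_left]
    have hd : Disjoint (Ktr m ×ˢ Λ) (Ktr m ×ˢ Λ') := by
      rw [Finset.disjoint_left]
      rintro p hp hp'
      exact (Finset.disjoint_left.1 hdisj) (Finset.mem_product.1 hp).2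
        (Finset.mem_product.1 hp').2
    rw [hunion, Finset.prod_union hd]
  have hprob1 : IsProbabilityMeasure (M.ref.map (restrict Λ)) :=
    haveI := M.href.1
    Measure.isProbabilityMeasure_map (measurable_restrict Λ).aemeasurable
  have hprob2 : IsProbabilityMeasure (M.ref.map (restrict Λ')) :=
    haveI := M.href.1
    Measure.isProbabilityMeasure_map (measurable_restrict Λ').aemeasurable
  have hmul := ENNReal.Tendsto.mul h2 (Or.inr (measure_ne_top _ _)) h3
    (Or.inr (measure_ne_top _ _))
  have h1' : Tendsto (fun m => M.ref (cyl (Ktr m ×ˢ Λ) fun p => ω p.1 p.2)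
      * M.ref (cyl (Ktr m ×ˢ Λ') fun p => ω p.1 p.2)) atTop
      (nhds ((M.ref.map (restrict (Λ ∪ Λ'))) {ω})) := by
    refine Tendsto.congr (fun m => hsplit m) h1
  exact tendsto_nhds_unique h1' hmul

end RefFactor

section DiscreteSuperadd

lemma summable_of_ofReal_tsum_ne_top {ι : Type*} {f : ι → ℝ} (hf : ∀ i, 0 ≤ f i)
    (h : (∑' i, ENNReal.ofReal (f i)) ≠ ⊤) : Summable f := by
  have := ENNReal.summable_toReal h
  refine this.congr fun i => ?_
  rw [ENNReal.toReal_ofReal (hf i)]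

/-- Discrete two-block superadditivity of relative entropy against a product reference. -/
lemma discrete_superadd {ι₁ ι₂ : Type*} [Countable ι₁] [Countable ι₂]
    (Q1 : ι₁ → ℝ≥0∞) (Q2 : ι₂ → ℝ≥0∞) (P : ι₁ × ι₂ → ℝ≥0∞)
    (hQ1pos : ∀ a, Q1 a ≠ 0) (hQ1top : ∀ a, Q1 a ≠ ⊤)
    (hQ2pos : ∀ b, Q2 b ≠ 0) (hQ2top : ∀ b, Q2 b ≠ ⊤)
    (hQ2one : ∑' b, Q2 b = 1) (hPone : ∑' s, P s = 1) :
    (∑' a, ENNReal.ofReal (hent (Q1 a).toReal (∑' b, P (a, b)).toReal))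
      + ∑' b, ENNReal.ofReal (hent (Q2 b).toReal (∑' a, P (a, b)).toReal)
      ≤ ∑' s, ENNReal.ofReal (hent ((Q1 s.1).toReal * (Q2 s.2).toReal) (P s).toReal) := by
  classical
  -- basic real quantities
  set p : ι₁ × ι₂ → ℝ := fun s => (P s).toReal with hp
  have hPtop : ∀ s, P s ≠ ⊤ := fun s =>
    ne_top_of_le_ne_top ENNReal.one_ne_top (hPone ▸ ENNReal.le_tsum s)
  have hpnn : ∀ s, 0 ≤ p s := fun s => ENNReal.toReal_nonneg
  set M1 : ι₁ → ℝ≥0∞ := fun a => ∑' b, P (a, b) with hM1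
  set M2 : ι₂ → ℝ≥0∞ := fun b => ∑' a, P (a, b) with hM2
  have hM1sum : ∑' a, M1 a = 1 := by rw [hM1, ← ENNReal.tsum_prod, hPone]
  have hM2sum : ∑' b, M2 b = 1 := by
    rw [hM2, ← ENNReal.tsum_comm, ← ENNReal.tsum_prod, hPone]
  have hM1top : ∀ a, M1 a ≠ ⊤ := fun a =>
    ne_top_of_le_ne_top ENNReal.one_ne_top (hM1sum ▸ ENNReal.le_tsum a)
  have hM2top : ∀ b, M2 b ≠ ⊤ := fun b =>
    ne_top_of_le_ne_top ENNReal.one_ne_top (hM2sum ▸ ENNReal.le_tsum b)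
  set m1 : ι₁ → ℝ := fun a => (M1 a).toReal with hm1
  set m2 : ι₂ → ℝ := fun b => (M2 b).toReal with hm2
  have hm1nn : ∀ a, 0 ≤ m1 a := fun a => ENNReal.toReal_nonneg
  have hm1_eq : ∀ a, m1 a = ∑' b, p (a, b) := fun a =>
    ENNReal.tsum_toReal_eq fun b => hPtop (a, b)
  have hm2_eq : ∀ b, m2 b = ∑' a, p (a, b) := fun b =>
    ENNReal.tsum_toReal_eq fun a => hPtop (a, b)
  have hm1summ : Summable m1 := ENNReal.summable_toReal (hM1sum ▸ ENNReal.one_ne_top)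
  have hm1one : ∑' a, m1 a = 1 := by
    rw [hm1, ← ENNReal.tsum_toReal_eq hM1top, hM1sum, ENNReal.toReal_one]
  have hrow_summ : ∀ a, Summable fun b => p (a, b) :=
    fun a => ENNReal.summable_toReal (hM1top a)
  have hcol_summ : ∀ b, Summable fun a => p (a, b) :=
    fun b => ENNReal.summable_toReal (hM2top b)
  set q1 : ι₁ → ℝ := fun a => (Q1 a).toReal with hq1
  set q2 : ι₂ → ℝ := fun b => (Q2 b).toReal with hq2
  have hq1pos : ∀ a, 0 < q1 a := fun a => ENNReal.toReal_pos (hQ1pos a) (hQ1top a)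
  have hq2pos : ∀ b, 0 < q2 b := fun b => ENNReal.toReal_pos (hQ2pos b) (hQ2top b)
  have hq2summ : Summable q2 := ENNReal.summable_toReal (hQ2one ▸ ENNReal.one_ne_top)
  have hq2one : ∑' b, q2 b = 1 := by
    rw [hq2, ← ENNReal.tsum_toReal_eq hQ2top, hQ2one, ENNReal.toReal_one]
  -- conditional weights
  have hM1_le : ∀ a b, P (a, b) ≤ M1 a := fun a b => hM1 ▸ ENNReal.le_tsum b
  have hp_zero_of_m1 : ∀ a b, m1 a = 0 → p (a, b) = 0 := by
    intro a b h
    have hM1a : M1 a = 0 := by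
      simp only [hm1] at h
      exact ((ENNReal.toReal_eq_zero_iff _).1 h).resolve_right (hM1top a)
    have hP0 : P (a, b) = 0 := le_antisymm (hM1a ▸ hM1_le a b) (zero_le)
    simp [hp, hP0]
  have hpcnn : ∀ a b, 0 ≤ p (a, b) / m1 a := fun a b => div_nonneg (hpnn _) (hm1nn a)
  have hpc_mul : ∀ a b, m1 a * (p (a, b) / m1 a) = p (a, b) := by
    intro a b
    rcases eq_or_ne (m1 a) 0 with h | h
    · rw [h, zero_mul, hp_zero_of_m1 a b h]
    · field_simp
  -- per-row inequality
  have hrow : ∀ a,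
      ENNReal.ofReal (hent (q1 a) (m1 a))
        + ENNReal.ofReal (m1 a) * ∑' b, ENNReal.ofReal (hent (q2 b) (p (a, b) / m1 a))
      ≤ ∑' b, ENNReal.ofReal (hent (q1 a * q2 b) (p (a, b))) := by
    intro a
    rcases eq_or_ne (m1 a) 0 with hz | hz
    · -- row with zero mass : both sides equal ofReal (q1 a)
      have hRHS : (∑' b, ENNReal.ofReal (hent (q1 a * q2 b) (p (a, b))))
          = ENNReal.ofReal (q1 a) := by
        have heach : ∀ b, ENNReal.ofReal (hent (q1 a * q2 b) (p (a, b)))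
            = ENNReal.ofReal (q1 a) * ENNReal.ofReal (q2 b) := by
          intro b
          rw [hp_zero_of_m1 a b hz, hent_zero_right, ENNReal.ofReal_mul (hq1pos a).le]
        rw [tsum_congr heach, ENNReal.tsum_mul_left,
          ← ENNReal.ofReal_tsum_of_nonneg (fun b => (hq2pos b).le) hq2summ, hq2one,
          ENNReal.ofReal_one, mul_one]
      rw [hRHS, hz, hent_zero_right, ENNReal.ofReal_zero, zero_mul, add_zero]
    · -- positive row mass
      have hm1pos : 0 < m1 a := lt_of_le_of_ne (hm1nn a) (Ne.symm hz)
      set kk : ι₂ → ℝ := fun b => q2 b * (q1 a - m1 a) + p (a, b) * Real.log (m1 a / q1 a)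
        with hkk
      have hkksumm : Summable kk :=
        ((hq2summ.mul_right _).add ((hrow_summ a).mul_right _))
      have hkksum : ∑' b, kk b = hent (q1 a) (m1 a) := by
        rw [hkk, Summable.tsum_add (hq2summ.mul_right _) ((hrow_summ a).mul_right _),
          tsum_mul_right, tsum_mul_right, hq2one, one_mul, ← hm1_eq a]
        unfold hent
        ring
      have hident : ∀ b, hent (q1 a * q2 b) (p (a, b))
          = m1 a * hent (q2 b) (p (a, b) / m1 a) + kk b := by
        intro b
        rcases eq_or_lt_of_le (hpnn (a, b)) with hp0 | hppos
        · rw [← hp0, zero_div, hent_zero_right, hent_zero_right]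
          simp only [hkk, ← hp0, zero_mul, add_zero]
          ring
        · have hq1q2 : 0 < q1 a * q2 b := mul_pos (hq1pos a) (hq2pos b)
          have hcancel : m1 a * (p (a, b) / m1 a) = p (a, b) := hpc_mul a b
          have hlog : Real.log (p (a, b) / (q1 a * q2 b))
              = Real.log (p (a, b) / m1 a / q2 b) + Real.log (m1 a / q1 a) := by
            rw [Real.log_div (ne_of_gt hppos) (ne_of_gt hq1q2),
              Real.log_mul (ne_of_gt (hq1pos a)) (ne_of_gt (hq2pos b)),
              Real.log_div (ne_of_gt (div_pos hppos hm1pos)) (ne_of_gt (hq2pos b)),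
              Real.log_div (ne_of_gt hppos) (ne_of_gt hm1pos),
              Real.log_div (ne_of_gt hm1pos) (ne_of_gt (hq1pos a))]
            ring
          simp only [hkk]
          unfold hent
          rw [hlog]
          linear_combination (1 - Real.log (p (a, b) / m1 a / q2 b)) * hcancel
      rcases eq_or_ne (∑' b, ENNReal.ofReal (hent (q1 a * q2 b) (p (a, b)))) ⊤ with htop | htop
      · rw [htop]; exact le_top
      · -- finite case : everything is summable and we get equality
        have hLnn : ∀ b, 0 ≤ hent (q1 a * q2 b) (p (a, b)) :=
          fun b => hent_nonneg (mul_pos (hq1pos a) (hq2pos b)) (hpnn _)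
        have hLsumm : Summable fun b => hent (q1 a * q2 b) (p (a, b)) :=
          summable_of_ofReal_tsum_ne_top hLnn htop
        have hcondnn : ∀ b, 0 ≤ hent (q2 b) (p (a, b) / m1 a) :=
          fun b => hent_nonneg (hq2pos b) (hpcnn a b)
        have hcondsumm : Summable fun b => hent (q2 b) (p (a, b) / m1 a) := by
          have heq : (fun b => hent (q2 b) (p (a, b) / m1 a))
              = fun b => (hent (q1 a * q2 b) (p (a, b)) - kk b) * (1 / m1 a) := by
            funext b
            rw [hident b]
            field_simp
            ring
          rw [heq]
          exact ((hLsumm.sub hkksumm).mul_right _)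
        have hsum_eq : (∑' b, hent (q1 a * q2 b) (p (a, b)))
            = m1 a * (∑' b, hent (q2 b) (p (a, b) / m1 a)) + hent (q1 a) (m1 a) := by
          rw [tsum_congr hident, Summable.tsum_add (hcondsumm.mul_left _) hkksumm,
            tsum_mul_left, hkksum]
        have hcond_tsum_nn : 0 ≤ ∑' b, hent (q2 b) (p (a, b) / m1 a) :=
          tsum_nonneg hcondnn
        calc ENNReal.ofReal (hent (q1 a) (m1 a))
              + ENNReal.ofReal (m1 a) * ∑' b, ENNReal.ofReal (hent (q2 b) (p (a, b) / m1 a))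
            = ENNReal.ofReal (hent (q1 a) (m1 a))
              + ENNReal.ofReal (m1 a)
                * ENNReal.ofReal (∑' b, hent (q2 b) (p (a, b) / m1 a)) := by
              rw [ENNReal.ofReal_tsum_of_nonneg hcondnn hcondsumm]
          _ = ENNReal.ofReal (hent (q1 a) (m1 a))
              + ENNReal.ofReal (m1 a * ∑' b, hent (q2 b) (p (a, b) / m1 a)) := by
              rw [ENNReal.ofReal_mul (hm1nn a)]
          _ = ENNReal.ofReal (m1 a * (∑' b, hent (q2 b) (p (a, b) / m1 a))
              + hent (q1 a) (m1 a)) := by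
              rw [ENNReal.ofReal_add (mul_nonneg (hm1nn a) hcond_tsum_nn)
                (hent_nonneg (hq1pos a) (hm1nn a)), add_comm]
          _ = ENNReal.ofReal (∑' b, hent (q1 a * q2 b) (p (a, b))) := by rw [hsum_eq]
          _ = ∑' b, ENNReal.ofReal (hent (q1 a * q2 b) (p (a, b))) :=
              ENNReal.ofReal_tsum_of_nonneg hLnn hLsumm
          _ ≤ ∑' b, ENNReal.ofReal (hent (q1 a * q2 b) (p (a, b))) := le_rfl
  -- column convexity step
  have hcol : (∑' b, ENNReal.ofReal (hent (q2 b) (m2 b)))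
      ≤ ∑' a, ENNReal.ofReal (m1 a)
          * ∑' b, ENNReal.ofReal (hent (q2 b) (p (a, b) / m1 a)) := by
    have hperb : ∀ b, ENNReal.ofReal (hent (q2 b) (m2 b))
        ≤ ∑' a, ENNReal.ofReal (m1 a)
            * ENNReal.ofReal (hent (q2 b) (p (a, b) / m1 a)) := by
      intro b
      have hwt : Summable fun a => m1 a * (p (a, b) / m1 a) := by
        refine (hcol_summ b).congr fun a => ?_
        rw [hpc_mul a b]
      have hT : m2 b = ∑' a, m1 a * (p (a, b) / m1 a) := by
        rw [hm2_eq b]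
        exact (tsum_congr fun a => (hpc_mul a b).symm)
      have := key_convex (c := q2 b) (hq2pos b).le m1 (fun a => p (a, b) / m1 a)
        hm1nn (fun a => hpcnn a b) hm1summ hm1one hwt
        (fun hc => absurd hc (ne_of_gt (hq2pos b)))
      rw [← hT] at this
      exact this
    calc (∑' b, ENNReal.ofReal (hent (q2 b) (m2 b)))
        ≤ ∑' b, ∑' a, ENNReal.ofReal (m1 a)
            * ENNReal.ofReal (hent (q2 b) (p (a, b) / m1 a)) :=
          ENNReal.tsum_le_tsum hperb
      _ = ∑' a, ∑' b, ENNReal.ofReal (m1 a)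
            * ENNReal.ofReal (hent (q2 b) (p (a, b) / m1 a)) :=
          ENNReal.tsum_comm
      _ = ∑' a, ENNReal.ofReal (m1 a)
            * ∑' b, ENNReal.ofReal (hent (q2 b) (p (a, b) / m1 a)) := by
          refine tsum_congr fun a => ?_
          rw [ENNReal.tsum_mul_left]
  -- assemble
  calc (∑' a, ENNReal.ofReal (hent (Q1 a).toReal (∑' b, P (a, b)).toReal))
        + ∑' b, ENNReal.ofReal (hent (Q2 b).toReal (∑' a, P (a, b)).toReal)
      = (∑' a, ENNReal.ofReal (hent (q1 a) (m1 a)))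
        + ∑' b, ENNReal.ofReal (hent (q2 b) (m2 b)) := rfl
    _ ≤ (∑' a, ENNReal.ofReal (hent (q1 a) (m1 a)))
        + ∑' a, ENNReal.ofReal (m1 a)
            * ∑' b, ENNReal.ofReal (hent (q2 b) (p (a, b) / m1 a)) :=
        add_le_add le_rfl hcol
    _ = ∑' a, (ENNReal.ofReal (hent (q1 a) (m1 a))
        + ENNReal.ofReal (m1 a)
            * ∑' b, ENNReal.ofReal (hent (q2 b) (p (a, b) / m1 a))) :=
        (ENNReal.tsum_add).symm
    _ ≤ ∑' a, ∑' b, ENNReal.ofReal (hent (q1 a * q2 b) (p (a, b))) :=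
        ENNReal.tsum_le_tsum hrow
    _ = ∑' s : ι₁ × ι₂, ENNReal.ofReal (hent (q1 s.1 * q2 s.2) (p s)) :=
        (ENNReal.tsum_prod).symm
    _ = ∑' s : ι₁ × ι₂,
          ENNReal.ofReal (hent ((Q1 s.1).toReal * (Q2 s.2).toReal) (P s).toReal) := rfl

end DiscreteSuperadd

section Superadd

lemma hent_zero_zero : hent 0 0 = 0 := by simp [hent]

lemma meas_countable_tsum {α : Type*} [MeasurableSpace α] [MeasurableSingletonClass α]
    (μ : Measure α) {s : Set α} (hs : s.Countable) : μ s = ∑' x : s, μ {(x : α)} := by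
  conv_lhs => rw [← Set.biUnion_of_singleton s]
  rw [measure_biUnion hs ?_ fun x _ => measurableSet_singleton _]
  intro x _ y _ hxy
  exact Set.disjoint_singleton.2 hxy

lemma null_of_countable_singletons {α : Type*} [MeasurableSpace α] [MeasurableSingletonClass α]
    (μ : Measure α) {s : Set α} (hs : s.Countable) (h : ∀ x ∈ s, μ {x} = 0) : μ s = 0 := by
  rw [meas_countable_tsum μ hs]
  exact ENNReal.tsum_eq_zero.2 fun x => h x x.2

lemma restrict_eq_zero_off {B : Finset (Site d)} {ω : Config d} (h : restrict B ω = ω)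
    {x : Site d} (hx : x ∉ B) (k : ℕ+) : ω k x = 0 := by
  have := congrFun (congrFun h k) x
  simpa [restrict, hx] using this.symm

/-- Combination of two configurations. -/
def comb (α β : Config d) : Config d := fun k x => α k x + β k x

lemma restrict_comb_left {Λ Λ' : Finset (Site d)} (hd : Disjoint Λ Λ') {α β : Config d}
    (hα : restrict Λ α = α) (hβ : restrict Λ' β = β) :
    restrict Λ (comb α β) = α := by
  funext k x
  by_cases hx : x ∈ Λ
  · have hβ0 : β k x = 0 := restrict_eq_zero_off hβ (Finset.disjoint_left.1 hd hx) k
    simp [restrict, comb, hx, hβ0]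
  · simp only [restrict, if_neg hx]
    exact (restrict_eq_zero_off hα hx k).symm

lemma restrict_comb_right {Λ Λ' : Finset (Site d)} (hd : Disjoint Λ Λ') {α β : Config d}
    (hα : restrict Λ α = α) (hβ : restrict Λ' β = β) :
    restrict Λ' (comb α β) = β := by
  funext k x
  by_cases hx : x ∈ Λ'
  · have hα0 : α k x = 0 := restrict_eq_zero_off hα (Finset.disjoint_right.1 hd hx) k
    simp [restrict, comb, hx, hα0]
  · simp only [restrict, if_neg hx]
    exact (restrict_eq_zero_off hβ hx k).symm

lemma restrict_union_comb {Λ Λ' : Finset (Site d)} {α β : Config d}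
    (hα : restrict Λ α = α) (hβ : restrict Λ' β = β) :
    restrict (Λ ∪ Λ') (comb α β) = comb α β := by
  funext k x
  by_cases hx : x ∈ Λ ∪ Λ'
  · simp [restrict, hx]
  · have hx1 : x ∉ Λ := fun h => hx (Finset.mem_union_left _ h)
    have hx2 : x ∉ Λ' := fun h => hx (Finset.mem_union_right _ h)
    simp only [restrict, if_neg hx, comb]
    rw [restrict_eq_zero_off hα hx1 k, restrict_eq_zero_off hβ hx2 k]

lemma comb_decomp {Λ Λ' : Finset (Site d)} (hd : Disjoint Λ Λ') {ω : Config d}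
    (hω : restrict (Λ ∪ Λ') ω = ω) :
    comb (restrict Λ ω) (restrict Λ' ω) = ω := by
  funext k x
  simp only [comb, restrict]
  by_cases hx1 : x ∈ Λ
  · rw [if_pos hx1, if_neg (Finset.disjoint_left.1 hd hx1), add_zero]
  · rw [if_neg hx1, zero_add]
    by_cases hx2 : x ∈ Λ'
    · rw [if_pos hx2]
    · rw [if_neg hx2]
      exact (restrict_eq_zero_off hω (by simp [Finset.mem_union, hx1, hx2]) k).symm

lemma measurableSet_fixed (B : Finset (Site d)) :
    MeasurableSet {ω : Config d | restrict B ω = ω} := by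
  have h : {ω : Config d | restrict B ω = ω}
      = ⋂ p : ℕ+ × Site d, {ω : Config d | restrict B ω p.1 p.2 = ω p.1 p.2} := by
    ext ω
    simp only [Set.mem_setOf_eq, Set.mem_iInter, Prod.forall]
    constructor
    · intro h k x; rw [h]
    · intro h; funext k x; exact h k x
  rw [h]
  refine MeasurableSet.iInter fun p => ?_
  have : {ω : Config d | restrict B ω p.1 p.2 = ω p.1 p.2}
      = ⋃ n : ℕ, ({ω : Config d | restrict B ω p.1 p.2 = n}
        ∩ {ω : Config d | ω p.1 p.2 = n}) := by
    ext ω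
    simp only [Set.mem_setOf_eq, Set.mem_iUnion, Set.mem_inter_iff]
    constructor
    · intro h; exact ⟨ω p.1 p.2, h, rfl⟩
    · rintro ⟨n, h1, h2⟩; rw [h1, h2]
  rw [this]
  refine MeasurableSet.iUnion fun n => MeasurableSet.inter ?_ ?_
  · exact ((measurable_coord p.1 p.2).comp (measurable_restrict B))
      (measurableSet_singleton n)
  · exact (measurable_coord p.1 p.2) (measurableSet_singleton n)

variable (M : Model d)

/-- The relative-entropy functional in a window. -/
noncomputable def HB (μ : Measure (Config d)) (Λ : Finset (Site d)) : ℝ≥0∞ :=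
  Hrel (μ.map (restrict Λ)) (M.ref.map (restrict Λ))

/-- Superadditivity of the window relative entropy over disjoint windows. -/
lemma HB_superadd (μ : Measure (Config d)) [hμp : IsProbabilityMeasure μ]
    {Λ Λ' : Finset (Site d)} (hdisj : Disjoint Λ Λ') :
    HB M μ Λ + HB M μ Λ' ≤ HB M μ (Λ ∪ Λ') := by
  classical
  haveI hrefp : IsProbabilityMeasure M.ref := M.href.1
  set A := μ.map (restrict (Λ ∪ Λ')) with hA
  set B := M.ref.map (restrict (Λ ∪ Λ')) with hB
  set A₁ := μ.map (restrict Λ) with hA₁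
  set B₁ := M.ref.map (restrict Λ) with hB₁
  set A₂ := μ.map (restrict Λ') with hA₂
  set B₂ := M.ref.map (restrict Λ') with hB₂
  haveI : IsProbabilityMeasure A :=
    Measure.isProbabilityMeasure_map (measurable_restrict _).aemeasurable
  haveI : IsProbabilityMeasure B :=
    Measure.isProbabilityMeasure_map (measurable_restrict _).aemeasurable
  haveI : IsProbabilityMeasure A₁ :=
    Measure.isProbabilityMeasure_map (measurable_restrict _).aemeasurable
  haveI : IsProbabilityMeasure B₁ :=
    Measure.isProbabilityMeasure_map (measurable_restrict _).aemeasurable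
  haveI : IsProbabilityMeasure A₂ :=
    Measure.isProbabilityMeasure_map (measurable_restrict _).aemeasurable
  haveI : IsProbabilityMeasure B₂ :=
    Measure.isProbabilityMeasure_map (measurable_restrict _).aemeasurable
  by_cases hac : A ≪ B
  swap
  · have : HB M μ (Λ ∪ Λ') = ⊤ := Hrel_of_not_ac hac
    rw [this]; exact le_top
  have hA1m : A₁ = A.map (restrict Λ) := (map_restrict_restrict μ Finset.subset_union_left).symm
  have hB1m : B₁ = B.map (restrict Λ) :=
    (map_restrict_restrict M.ref Finset.subset_union_left).symm
  have hA2m : A₂ = A.map (restrict Λ') :=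
    (map_restrict_restrict μ Finset.subset_union_right).symm
  have hB2m : B₂ = B.map (restrict Λ') :=
    (map_restrict_restrict M.ref Finset.subset_union_right).symm
  have hac1 : A₁ ≪ B₁ := by rw [hA1m, hB1m]; exact ac_map hac (measurable_restrict Λ)
  have hac2 : A₂ ≪ B₂ := by rw [hA2m, hB2m]; exact ac_map hac (measurable_restrict Λ')
  -- countable supports
  obtain ⟨C₁, hC₁c, hC₁null, hC₁fix⟩ := ref_support M Λ
  obtain ⟨C₂, hC₂c, hC₂null, hC₂fix⟩ := ref_support M Λ'
  set T₁ : Set (Config d) := {ω ∈ C₁ | B₁ {ω} ≠ 0} with hT₁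
  set T₂ : Set (Config d) := {ω ∈ C₂ | B₂ {ω} ≠ 0} with hT₂
  have hT₁c : T₁.Countable := hC₁c.mono (Set.sep_subset _ _)
  have hT₂c : T₂.Countable := hC₂c.mono (Set.sep_subset _ _)
  have hB₁T₁ : B₁ T₁ᶜ = 0 := by
    have hsub : T₁ᶜ ⊆ C₁ᶜ ∪ {ω ∈ C₁ | B₁ {ω} = 0} := by
      intro ω hω
      by_cases h : ω ∈ C₁
      · refine Or.inr ⟨h, ?_⟩
        by_contra hne
        exact hω ⟨h, hne⟩
      · exact Or.inl h
    refine measure_mono_null hsub (measure_union_null hC₁null ?_)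
    exact null_of_countable_singletons B₁ (hC₁c.mono (Set.sep_subset _ _))
      fun x hx => by simpa using hx.2
  have hB₂T₂ : B₂ T₂ᶜ = 0 := by
    have hsub : T₂ᶜ ⊆ C₂ᶜ ∪ {ω ∈ C₂ | B₂ {ω} = 0} := by
      intro ω hω
      by_cases h : ω ∈ C₂
      · refine Or.inr ⟨h, ?_⟩
        by_contra hne
        exact hω ⟨h, hne⟩
      · exact Or.inl h
    refine measure_mono_null hsub (measure_union_null hC₂null ?_)
    exact null_of_countable_singletons B₂ (hC₂c.mono (Set.sep_subset _ _))
      fun x hx => by simpa using hx.2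
  have hA₁T₁ : A₁ T₁ᶜ = 0 := hac1 hB₁T₁
  have hA₂T₂ : A₂ T₂ᶜ = 0 := hac2 hB₂T₂
  have hT₁fix : ∀ ω ∈ T₁, restrict Λ ω = ω := fun ω hω => hC₁fix ω hω.1
  have hT₂fix : ∀ ω ∈ T₂, restrict Λ' ω = ω := fun ω hω => hC₂fix ω hω.1
  haveI : Countable ↥T₁ := hT₁c.to_subtype
  haveI : Countable ↥T₂ := hT₂c.to_subtype
  -- the combination map
  set e : ↥T₁ × ↥T₂ → Config d := fun σ => comb (σ.1 : Config d) (σ.2 : Config d) with he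
  have heΛ : ∀ σ : ↥T₁ × ↥T₂, restrict Λ (e σ) = (σ.1 : Config d) :=
    fun σ => restrict_comb_left hdisj (hT₁fix _ σ.1.2) (hT₂fix _ σ.2.2)
  have heΛ' : ∀ σ : ↥T₁ × ↥T₂, restrict Λ' (e σ) = (σ.2 : Config d) :=
    fun σ => restrict_comb_right hdisj (hT₁fix _ σ.1.2) (hT₂fix _ σ.2.2)
  have heU : ∀ σ : ↥T₁ × ↥T₂, restrict (Λ ∪ Λ') (e σ) = e σ :=
    fun σ => restrict_union_comb (hT₁fix _ σ.1.2) (hT₂fix _ σ.2.2)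
  have hinj : Function.Injective e := by
    intro σ τ h
    have h1 : (σ.1 : Config d) = (τ.1 : Config d) := by
      rw [← heΛ σ, ← heΛ τ, h]
    have h2 : (σ.2 : Config d) = (τ.2 : Config d) := by
      rw [← heΛ' σ, ← heΛ' τ, h]
    exact Prod.ext (Subtype.ext h1) (Subtype.ext h2)
  set U : Set (Config d) := Set.range e with hU
  have hUc : U.Countable := Set.countable_range e
  have hUmeas : MeasurableSet U := hUc.measurableSet
  -- U carries both A and B
  have hcover : Uᶜ ⊆ {ω : Config d | restrict (Λ ∪ Λ') ω = ω}ᶜ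
      ∪ (restrict Λ ⁻¹' T₁ᶜ ∪ restrict Λ' ⁻¹' T₂ᶜ) := by
    intro ω hω
    by_cases h1 : restrict (Λ ∪ Λ') ω = ω
    swap
    · exact Or.inl h1
    by_cases h2 : restrict Λ ω ∈ T₁
    swap
    · exact Or.inr (Or.inl h2)
    by_cases h3 : restrict Λ' ω ∈ T₂
    swap
    · exact Or.inr (Or.inr h3)
    exact absurd ⟨(⟨restrict Λ ω, h2⟩, ⟨restrict Λ' ω, h3⟩), comb_decomp hdisj h1⟩ hω
  have hfixnull : ∀ (ξ : Measure (Config d)),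
      (ξ.map (restrict (Λ ∪ Λ'))) {ω : Config d | restrict (Λ ∪ Λ') ω = ω}ᶜ = 0 := by
    intro ξ
    rw [Measure.map_apply (measurable_restrict _) (measurableSet_fixed _).compl]
    have : restrict (Λ ∪ Λ') ⁻¹' {ω : Config d | restrict (Λ ∪ Λ') ω = ω}ᶜ = ∅ := by
      ext σ
      simp only [Set.mem_preimage, Set.mem_compl_iff, Set.mem_setOf_eq,
        Set.mem_empty_iff_false, iff_false, not_not]
      exact restrict_idem _ σ
    rw [this, measure_empty]
  have hBU : B Uᶜ = 0 := by
    refine measure_mono_null hcover (measure_union_null (hfixnull M.ref) ?_)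
    refine measure_union_null ?_ ?_
    · have : B (restrict Λ ⁻¹' T₁ᶜ) = B₁ T₁ᶜ := by
        rw [hB1m, Measure.map_apply (measurable_restrict _) hT₁c.measurableSet.compl]
      rw [this]; exact hB₁T₁
    · have : B (restrict Λ' ⁻¹' T₂ᶜ) = B₂ T₂ᶜ := by
        rw [hB2m, Measure.map_apply (measurable_restrict _) hT₂c.measurableSet.compl]
      rw [this]; exact hB₂T₂
  have hAU : A Uᶜ = 0 := hac hBU
  -- factorization of B on U
  have hBsing : ∀ σ : ↥T₁ × ↥T₂,
      B {e σ} = B₁ {(σ.1 : Config d)} * B₂ {(σ.2 : Config d)} := by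
    intro σ
    have := ref_factor M hdisj (e σ) (heU σ)
    rw [hB, hB₁, hB₂]
    rw [this, heΛ σ, heΛ' σ]
  -- fiber sums
  have hfiber1 : ∀ (ξ : Measure (Config d)), ξ Uᶜ = 0 → ∀ α : ↥T₁,
      (ξ.map (restrict Λ)) {(α : Config d)} = ∑' β : ↥T₂, ξ {e (α, β)} := by
    intro ξ hξ α
    rw [Measure.map_apply (measurable_restrict Λ) (measurableSet_singleton _)]
    have hV : restrict Λ ⁻¹' {(α : Config d)} ∩ U = ⋃ β : ↥T₂, {e (α, β)} := by
      ext ω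
      simp only [Set.mem_inter_iff, Set.mem_preimage, Set.mem_singleton_iff,
        Set.mem_iUnion]
      constructor
      · rintro ⟨h1, σ, rfl⟩
        have : σ.1 = α := Subtype.ext (by rw [← heΛ σ, h1])
        exact ⟨σ.2, by rw [← this]⟩
      · rintro ⟨β, rfl⟩
        exact ⟨heΛ (α, β), ⟨(α, β), rfl⟩⟩
    have hle : ξ (restrict Λ ⁻¹' {(α : Config d)})
        ≤ ξ (restrict Λ ⁻¹' {(α : Config d)} ∩ U) := by
      calc ξ (restrict Λ ⁻¹' {(α : Config d)})
          ≤ ξ (restrict Λ ⁻¹' {(α : Config d)} ∩ U)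
            + ξ (restrict Λ ⁻¹' {(α : Config d)} \ U) := measure_le_inter_add_diff _ _ _
        _ ≤ ξ (restrict Λ ⁻¹' {(α : Config d)} ∩ U) + ξ Uᶜ :=
            add_le_add le_rfl (measure_mono fun x hx => hx.2)
        _ = ξ (restrict Λ ⁻¹' {(α : Config d)} ∩ U) := by rw [hξ, add_zero]
    have heq : ξ (restrict Λ ⁻¹' {(α : Config d)})
        = ξ (restrict Λ ⁻¹' {(α : Config d)} ∩ U) :=
      le_antisymm hle (measure_mono Set.inter_subset_left)
    rw [heq, hV, measure_iUnion ?_ fun β => measurableSet_singleton _]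
    intro β β' hββ'
    refine Set.disjoint_singleton.2 fun hc => hββ' ?_
    have := hinj hc
    exact (Prod.ext_iff.1 this).2
  have hfiber2 : ∀ (ξ : Measure (Config d)), ξ Uᶜ = 0 → ∀ β : ↥T₂,
      (ξ.map (restrict Λ')) {(β : Config d)} = ∑' α : ↥T₁, ξ {e (α, β)} := by
    intro ξ hξ β
    rw [Measure.map_apply (measurable_restrict Λ') (measurableSet_singleton _)]
    have hV : restrict Λ' ⁻¹' {(β : Config d)} ∩ U = ⋃ α : ↥T₁, {e (α, β)} := by
      ext ω
      simp only [Set.mem_inter_iff, Set.mem_preimage, Set.mem_singleton_iff,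
        Set.mem_iUnion]
      constructor
      · rintro ⟨h1, σ, rfl⟩
        have : σ.2 = β := Subtype.ext (by rw [← heΛ' σ, h1])
        exact ⟨σ.1, by rw [← this]⟩
      · rintro ⟨α, rfl⟩
        exact ⟨heΛ' (α, β), ⟨(α, β), rfl⟩⟩
    have hle : ξ (restrict Λ' ⁻¹' {(β : Config d)})
        ≤ ξ (restrict Λ' ⁻¹' {(β : Config d)} ∩ U) := by
      calc ξ (restrict Λ' ⁻¹' {(β : Config d)})
          ≤ ξ (restrict Λ' ⁻¹' {(β : Config d)} ∩ U)
            + ξ (restrict Λ' ⁻¹' {(β : Config d)} \ U) := measure_le_inter_add_diff _ _ _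
        _ ≤ ξ (restrict Λ' ⁻¹' {(β : Config d)} ∩ U) + ξ Uᶜ :=
            add_le_add le_rfl (measure_mono fun x hx => hx.2)
        _ = ξ (restrict Λ' ⁻¹' {(β : Config d)} ∩ U) := by rw [hξ, add_zero]
    have heq : ξ (restrict Λ' ⁻¹' {(β : Config d)})
        = ξ (restrict Λ' ⁻¹' {(β : Config d)} ∩ U) :=
      le_antisymm hle (measure_mono Set.inter_subset_left)
    rw [heq, hV, measure_iUnion ?_ fun α => measurableSet_singleton _]
    intro α α' hαα'
    refine Set.disjoint_singleton.2 fun hc => hαα' ?_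
    have := hinj hc
    exact (Prod.ext_iff.1 this).1
  -- total masses
  have htotA : ∑' σ : ↥T₁ × ↥T₂, A {e σ} = 1 := by
    have hAU1 : A U = 1 := by
      have := measure_add_measure_compl (μ := A) hUmeas
      rw [hAU, add_zero, measure_univ] at this
      exact this
    have h1 : A U = ∑' u : ↥U, A {(u : Config d)} := meas_countable_tsum A hUc
    have h2 : ∑' u : ↥U, A {(u : Config d)} = ∑' σ : ↥T₁ × ↥T₂, A {e σ} := by
      rw [← (Equiv.ofInjective e hinj).tsum_eq (fun u : ↥U => A {(u : Config d)})]
      exact tsum_congr fun σ => by rw [Equiv.ofInjective_apply]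
    rw [← h2, ← h1, hAU1]
  have htotQ2 : ∑' β : ↥T₂, B₂ {(β : Config d)} = 1 := by
    have hB₂T : B₂ T₂ = 1 := by
      have := measure_add_measure_compl (μ := B₂) hT₂c.measurableSet
      rw [hB₂T₂, add_zero, measure_univ] at this
      exact this
    rw [← meas_countable_tsum B₂ hT₂c, hB₂T]
  -- reduce the three Hrel sums to the countable supports
  have hsum1 : Hrel A₁ B₁
      = ∑' α : ↥T₁, ENNReal.ofReal
          (hent (B₁ {(α : Config d)}).toReal (A₁ {(α : Config d)}).toReal) := by
    rw [Hrel_of_ac hac1]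
    rw [← tsum_subtype_eq_of_support_subset (s := T₁) ?_]
    intro x hx
    simp only [Function.mem_support, ne_eq] at hx
    by_contra hxT
    have hB0 : B₁ {x} = 0 :=
      measure_mono_null (Set.singleton_subset_iff.2 hxT) hB₁T₁
    have hA0 : A₁ {x} = 0 := hac1 hB0
    rw [hB0, hA0] at hx
    simp [hent_zero_zero] at hx
  have hsum2 : Hrel A₂ B₂
      = ∑' β : ↥T₂, ENNReal.ofReal
          (hent (B₂ {(β : Config d)}).toReal (A₂ {(β : Config d)}).toReal) := by
    rw [Hrel_of_ac hac2]
    rw [← tsum_subtype_eq_of_support_subset (s := T₂) ?_]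
    intro x hx
    simp only [Function.mem_support, ne_eq] at hx
    by_contra hxT
    have hB0 : B₂ {x} = 0 :=
      measure_mono_null (Set.singleton_subset_iff.2 hxT) hB₂T₂
    have hA0 : A₂ {x} = 0 := hac2 hB0
    rw [hB0, hA0] at hx
    simp [hent_zero_zero] at hx
  have hsum3 : Hrel A B
      = ∑' σ : ↥T₁ × ↥T₂, ENNReal.ofReal
          (hent (B {e σ}).toReal (A {e σ}).toReal) := by
    rw [Hrel_of_ac hac]
    rw [← tsum_subtype_eq_of_support_subset (s := U) ?_]
    · rw [← (Equiv.ofInjective e hinj).tsum_eq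
        (fun u : ↥U => ENNReal.ofReal (hent (B {(u : Config d)}).toReal
          (A {(u : Config d)}).toReal))]
      exact tsum_congr fun σ => by rw [Equiv.ofInjective_apply]
    · intro x hx
      simp only [Function.mem_support, ne_eq] at hx
      by_contra hxU
      have hB0 : B {x} = 0 :=
        measure_mono_null (Set.singleton_subset_iff.2 hxU) hBU
      have hA0 : A {x} = 0 := hac hB0
      rw [hB0, hA0] at hx
      simp [hent_zero_zero] at hx
  -- apply the discrete inequality
  have hQ1pos : ∀ α : ↥T₁, B₁ {(α : Config d)} ≠ 0 := fun α => α.2.2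
  have hQ2pos : ∀ β : ↥T₂, B₂ {(β : Config d)} ≠ 0 := fun β => β.2.2
  have hmain := discrete_superadd (fun α : ↥T₁ => B₁ {(α : Config d)})
    (fun β : ↥T₂ => B₂ {(β : Config d)}) (fun σ => A {e σ})
    hQ1pos (fun α => measure_ne_top _ _) hQ2pos (fun β => measure_ne_top _ _)
    htotQ2 htotA
  show Hrel A₁ B₁ + Hrel A₂ B₂ ≤ Hrel A B
  rw [hsum1, hsum2, hsum3]
  have hA1val : ∀ α : ↥T₁, (A₁ {(α : Config d)}) = ∑' β : ↥T₂, A {e (α, β)} := by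
    intro α; rw [hA1m]; exact hfiber1 A hAU α
  have hA2val : ∀ β : ↥T₂, (A₂ {(β : Config d)}) = ∑' α : ↥T₁, A {e (α, β)} := by
    intro β; rw [hA2m]; exact hfiber2 A hAU β
  have hfinal1 : (∑' α : ↥T₁, ENNReal.ofReal
      (hent (B₁ {(α : Config d)}).toReal (A₁ {(α : Config d)}).toReal))
      = ∑' α : ↥T₁, ENNReal.ofReal
        (hent (B₁ {(α : Config d)}).toReal (∑' β : ↥T₂, A {e (α, β)}).toReal) := by
    refine tsum_congr fun α => ?_
    rw [hA1val α]
  have hfinal2 : (∑' β : ↥T₂, ENNReal.ofReal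
      (hent (B₂ {(β : Config d)}).toReal (A₂ {(β : Config d)}).toReal))
      = ∑' β : ↥T₂, ENNReal.ofReal
        (hent (B₂ {(β : Config d)}).toReal (∑' α : ↥T₁, A {e (α, β)}).toReal) := by
    refine tsum_congr fun β => ?_
    rw [hA2val β]
  have hfinal3 : (∑' σ : ↥T₁ × ↥T₂, ENNReal.ofReal
      (hent (B {e σ}).toReal (A {e σ}).toReal))
      = ∑' σ : ↥T₁ × ↥T₂, ENNReal.ofReal
        (hent ((B₁ {(σ.1 : Config d)}).toReal * (B₂ {(σ.2 : Config d)}).toReal)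
          (A {e σ}).toReal) := by
    refine tsum_congr fun σ => ?_
    rw [hBsing σ, ENNReal.toReal_mul]
  rw [hfinal1, hfinal2, hfinal3]
  exact hmain

end Superadd

section Tiling

lemma box_card (n : ℕ) : (box d n).card = (2 * n + 1) ^ d := by
  rw [box, Fintype.card_piFinset]
  have h : (Finset.Icc (-(n : ℤ)) (n : ℤ)).card = 2 * n + 1 := by
    rw [Int.card_Icc]
    have : (n : ℤ) + 1 - -(n : ℤ) = ((2 * n + 1 : ℕ) : ℤ) := by push_cast; ring
    rw [this, Int.toNat_natCast]
  simp only [h, Finset.prod_const, Finset.card_univ, Fintype.card_fin]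

lemma recover_eq {n : ℕ} {q r : ℤ} (hr1 : -(n : ℤ) ≤ r) (hr2 : r ≤ n) :
    ((2 * (n : ℤ) + 1) * q + r + n) / (2 * (n : ℤ) + 1) = q := by
  have hL : (0 : ℤ) < 2 * n + 1 := by positivity
  have h1 : (2 * (n : ℤ) + 1) * q + r + n = (r + n) + (2 * (n : ℤ) + 1) * q := by ring
  rw [h1, Int.add_mul_ediv_left _ _ (ne_of_gt hL),
    Int.ediv_eq_zero_of_lt (by linarith) (by linarith), zero_add]

/-- The translate of the small box by `(2n+1)z`. -/
noncomputable def tile (n : ℕ) (z : Site d) : Finset (Site d) :=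
  (box d n).image (· + fun i => (2 * (n : ℤ) + 1) * z i)

lemma tile_disjoint (n : ℕ) {z z' : Site d} (hzz' : z ≠ z') :
    Disjoint (tile n z) (tile n z') := by
  rw [Finset.disjoint_left]
  rintro x hx hx'
  obtain ⟨y, hy, hxy⟩ := Finset.mem_image.1 hx
  obtain ⟨y', hy', hxy'⟩ := Finset.mem_image.1 hx'
  refine hzz' (funext fun i => ?_)
  have hyb := (Finset.mem_Icc.1 ((Fintype.mem_piFinset.1 hy) i))
  have hyb' := (Finset.mem_Icc.1 ((Fintype.mem_piFinset.1 hy') i))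
  have h1 : (2 * (n : ℤ) + 1) * z i + y i + n = x i + n := by
    have := congrFun hxy i
    simp only [Pi.add_apply] at this
    linarith [this.symm.le, this.le]
  have h2 : (2 * (n : ℤ) + 1) * z' i + y' i + n = x i + n := by
    have := congrFun hxy' i
    simp only [Pi.add_apply] at this
    linarith [this.symm.le, this.le]
  have e1 : z i = (x i + n) / (2 * (n : ℤ) + 1) := by
    rw [← h1, recover_eq hyb.1 hyb.2]
  have e2 : z' i = (x i + n) / (2 * (n : ℤ) + 1) := by
    rw [← h2, recover_eq hyb'.1 hyb'.2]
  rw [e1, e2]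

lemma box_tiling (n t : ℕ) :
    box d (n + (2 * n + 1) * t) = (box d t).biUnion (tile n) := by
  classical
  ext x
  simp only [Finset.mem_biUnion, tile, Finset.mem_image, box, Fintype.mem_piFinset,
    Finset.mem_Icc]
  constructor
  · intro hx
    set L : ℤ := 2 * (n : ℤ) + 1 with hL
    have hLpos : (0 : ℤ) < L := by rw [hL]; positivity
    refine ⟨fun i => (x i + n) / L, fun i => ?_, fun i => x i - L * ((x i + n) / L),
      fun i => ?_, ?_⟩
    · -- bounds on the quotient
      have hxi := hx i
      have hxi1 : -((n : ℤ) + L * t) ≤ x i := by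
        have := hxi.1
        push_cast at this ⊢
        rw [hL]; push_cast; linarith
      have hxi2 : x i ≤ (n : ℤ) + L * t := by
        have := hxi.2
        push_cast at this ⊢
        rw [hL]; push_cast; linarith
      constructor
      · have h1 : -(t : ℤ) * L ≤ x i + n := by nlinarith
        have := Int.ediv_le_ediv hLpos h1
        rwa [Int.mul_ediv_cancel _ (ne_of_gt hLpos)] at this
      · have h1 : x i + n ≤ 2 * n + (t : ℤ) * L := by nlinarith
        have h2 := Int.ediv_le_ediv hLpos h1
        have h3 : (2 * (n : ℤ) + (t : ℤ) * L) / L = (t : ℤ) := by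
          rw [Int.add_mul_ediv_right _ _ (ne_of_gt hLpos),
            Int.ediv_eq_zero_of_lt (by positivity) (by rw [hL]; linarith), zero_add]
        rwa [h3] at h2
    · -- bounds on the remainder
      show -(n : ℤ) ≤ x i - L * ((x i + (n : ℤ)) / L)
        ∧ x i - L * ((x i + (n : ℤ)) / L) ≤ (n : ℤ)
      have hmod1 : 0 ≤ (x i + n) % L := Int.emod_nonneg _ (ne_of_gt hLpos)
      have hmod2 : (x i + n) % L < L := Int.emod_lt_of_pos _ hLpos
      have hrem : x i - L * ((x i + n) / L) = (x i + n) % L - n := by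
        have := Int.mul_ediv_add_emod (x i + n) L
        linarith
      constructor
      · rw [hrem]; linarith
      · rw [hrem]; rw [hL] at hmod2; push_cast at hmod2 ⊢; linarith
    · funext i
      simp only [Pi.add_apply]
      ring
  · rintro ⟨z, hz, y, hy, rfl⟩
    intro i
    have hzi := hz i
    have hyi := hy i
    simp only [Pi.add_apply]
    have h1 : (2 * (n : ℤ) + 1) * z i ≤ (2 * (n : ℤ) + 1) * t := by
      have := hzi.2
      nlinarith [hzi.2]
    have h2 : -((2 * (n : ℤ) + 1) * t) ≤ (2 * (n : ℤ) + 1) * z i := by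
      nlinarith [hzi.1]
    constructor
    · push_cast
      linarith [hyi.1]
    · push_cast
      linarith [hyi.2]

end Tiling

section Claim4

variable (M : Model d)

lemma shiftEquiv_coe (z : Site d) : (shiftEquiv z : Config d → Config d) = shift z := rfl

lemma HB_shift (μ : Measure (Config d)) (hμ : ∀ z : Site d, μ.map (shift z) = μ)
    (Λ : Finset (Site d)) (z : Site d) :
    HB M μ (Λ.image (· + z)) = HB M μ Λ := by
  have key : ∀ (ξ : Measure (Config d)), ξ.map (shift z) = ξ →
      ξ.map (restrict Λ) = (ξ.map (restrict (Λ.image (· + z)))).map (shiftEquiv z) := by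
    intro ξ hξ
    rw [shiftEquiv_coe, Measure.map_map (measurable_shift z) (measurable_restrict _),
      ← restrict_comp_shift Λ z,
      ← Measure.map_map (measurable_restrict Λ) (measurable_shift z), hξ]
  rw [HB, HB, key μ (hμ z), key M.ref (ref_shift_invariant M z), Hrel_map_equiv]

/-- Key superadditivity estimate over the tiling. -/
lemma HB_box_lower (μ : Measure (Config d)) [IsProbabilityMeasure μ]
    (hμ : ∀ z : Site d, μ.map (shift z) = μ) (n t : ℕ) :
    ((box d t).card : ℝ≥0∞) * HB M μ (box d n)
      ≤ HB M μ (box d (n + (2 * n + 1) * t)) := by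
  classical
  have htile : ∀ z : Site d, HB M μ (tile n z) = HB M μ (box d n) := by
    intro z
    exact HB_shift M μ hμ (box d n) _
  have main : ∀ Z : Finset (Site d),
      (Z.card : ℝ≥0∞) * HB M μ (box d n) ≤ HB M μ (Z.biUnion (tile n)) := by
    intro Z
    induction Z using Finset.induction_on with
    | empty => simp
    | @insert z Z hz ih =>
      rw [Finset.biUnion_insert, Finset.card_insert_of_notMem hz]
      have hdisj : Disjoint (tile n z) (Z.biUnion (tile n)) := by
        rw [Finset.disjoint_biUnion_right]
        intro z' hz'
        exact tile_disjoint n fun hc => hz (hc ▸ hz')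
      calc ((Z.card + 1 : ℕ) : ℝ≥0∞) * HB M μ (box d n)
          = HB M μ (box d n) + (Z.card : ℝ≥0∞) * HB M μ (box d n) := by
            push_cast
            ring
        _ ≤ HB M μ (tile n z) + HB M μ (Z.biUnion (tile n)) := by
            rw [htile z]
            exact add_le_add le_rfl ih
        _ ≤ HB M μ (tile n z ∪ Z.biUnion (tile n)) := HB_superadd M μ hdisj
  rw [box_tiling n t]
  exact main (box d t)

/-- Claim 4 : every finite-volume entropy density is dominated by the limsup. -/
lemma HB_le_entDens (μ : Measure (Config d)) [IsProbabilityMeasure μ]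
    (hμ : ∀ z : Site d, μ.map (shift z) = μ) (n : ℕ) :
    HB M μ (box d n) / ((box d n).card : ℝ≥0∞) ≤ entDens M.ref μ := by
  have hcard_ne : ∀ m : ℕ, ((box d m).card : ℝ≥0∞) ≠ 0 := by
    intro m
    rw [box_card]
    simp [pow_eq_zero_iff]
  have hcard_top : ∀ m : ℕ, ((box d m).card : ℝ≥0∞) ≠ ⊤ := fun m => ENNReal.natCast_ne_top _
  have hfreq : ∀ t : ℕ, HB M μ (box d n) / ((box d n).card : ℝ≥0∞)
      ≤ HB M μ (box d (n + (2 * n + 1) * t))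
          / ((box d (n + (2 * n + 1) * t)).card : ℝ≥0∞) := by
    intro t
    have hcard : ((box d (n + (2 * n + 1) * t)).card : ℝ≥0∞)
        = ((box d t).card : ℝ≥0∞) * ((box d n).card : ℝ≥0∞) := by
      rw [box_card, box_card, box_card]
      have : 2 * (n + (2 * n + 1) * t) + 1 = (2 * t + 1) * (2 * n + 1) := by ring
      rw [this, mul_pow]
      push_cast
      ring
    rw [hcard]
    calc HB M μ (box d n) / ((box d n).card : ℝ≥0∞)
        = ((box d t).card : ℝ≥0∞) * HB M μ (box d n)
            / (((box d t).card : ℝ≥0∞) * ((box d n).card : ℝ≥0∞)) :=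
          (ENNReal.mul_div_mul_left _ _ (hcard_ne t) (hcard_top t)).symm
      _ ≤ HB M μ (box d (n + (2 * n + 1) * t))
            / (((box d t).card : ℝ≥0∞) * ((box d n).card : ℝ≥0∞)) :=
          ENNReal.div_le_div_right (HB_box_lower M μ hμ n t) _
  have hN : Tendsto (fun t : ℕ => n + (2 * n + 1) * t) atTop atTop := by
    refine tendsto_atTop_mono (fun t => ?_) tendsto_id
    simp only [id_eq]
    nlinarith
  have hbdd : IsBoundedUnder (· ≤ ·) atTop
      (fun m : ℕ => HB M μ (box d m) / ((box d m).card : ℝ≥0∞)) :=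
    ⟨⊤, Filter.Eventually.of_forall fun _ => le_top⟩
  refine le_limsup_of_frequently_le ?_ hbdd
  exact hN.frequently (Filter.Frequently.of_forall hfreq)

/-- Countable convexity of the entropy density. -/
lemma entDens_sum_le (W : ℕ → ℝ≥0∞) (hW : ∑' b, W b = 1) (P : ℕ → Measure (Config d))
    (hP : ∀ b, IsProbabilityMeasure (P b)) (hPs : ∀ b, ∀ z : Site d, (P b).map (shift z) = P b) :
    entDens M.ref (Measure.sum fun b => W b • P b) ≤ ∑' b, W b * entDens M.ref (P b) := by
  haveI hrefp : IsProbabilityMeasure M.ref := M.href.1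
  have hper : ∀ n : ℕ,
      Hrel ((Measure.sum fun b => W b • P b).map (restrict (box d n)))
          (M.ref.map (restrict (box d n))) / ((box d n).card : ℝ≥0∞)
        ≤ ∑' b, W b * entDens M.ref (P b) := by
    intro n
    haveI : IsProbabilityMeasure (M.ref.map (restrict (box d n))) :=
      Measure.isProbabilityMeasure_map (measurable_restrict _).aemeasurable
    have h1 : (Measure.sum fun b => W b • P b).map (restrict (box d n))
        = Measure.sum fun b => W b • (P b).map (restrict (box d n)) :=
      map_sum_smul W P (measurable_restrict _)
    have h2 := Hrel_sum_le (M.ref.map (restrict (box d n))) W hW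
      (fun b => (P b).map (restrict (box d n)))
      (fun b => haveI := hP b; Measure.isProbabilityMeasure_map (measurable_restrict _).aemeasurable)
    rw [h1]
    calc Hrel (Measure.sum fun b => W b • (P b).map (restrict (box d n)))
          (M.ref.map (restrict (box d n))) / ((box d n).card : ℝ≥0∞)
        ≤ (∑' b, W b * Hrel ((P b).map (restrict (box d n)))
            (M.ref.map (restrict (box d n)))) / ((box d n).card : ℝ≥0∞) :=
          ENNReal.div_le_div_right h2 _
      _ = ∑' b, W b * (Hrel ((P b).map (restrict (box d n)))
            (M.ref.map (restrict (box d n))) / ((box d n).card : ℝ≥0∞)) := by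
          rw [div_eq_mul_inv, ← ENNReal.tsum_mul_right]
          exact tsum_congr fun b => by rw [div_eq_mul_inv, mul_assoc]
      _ ≤ ∑' b, W b * entDens M.ref (P b) := by
          refine ENNReal.tsum_le_tsum fun b => mul_le_mul' le_rfl ?_
          haveI := hP b
          exact HB_le_entDens M (P b) (hPs b) n
  exact limsup_le_of_le (by isBoundedDefault) (Filter.Eventually.of_forall hper)

end Claim4

section Main

/-- Monotonicity of `φ(m, ·)` under stochastic domination. -/
lemma phi_mono (M : Model d) (m : ℕ+ → ℝ≥0) (ψ ψ' : PMF ℕ)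
    (hst : ∀ a : ℕ, (∑' b, if a ≤ b then ψ b else 0) ≤ ∑' b, if a ≤ b then ψ' b else 0) :
    phi M m ψ ≤ phi M m ψ' := by
  refine le_sInf fun r' hr' => ?_
  obtain ⟨P', hadm', rfl⟩ := hr'
  obtain ⟨hP'si, hP'con⟩ := hadm'
  obtain ⟨π, hrow, hcol, hsupp⟩ := exists_coupling ψ ψ' hst
  classical
  have hψtop : ∀ a, ψ a ≠ ⊤ := fun a => ψ.apply_ne_top a
  have hπle : ∀ a b, π a b ≤ ψ a := fun a b => (hrow a) ▸ ENNReal.le_tsum b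
  set W : ℕ → ℕ → ℝ≥0∞ := fun a b => π a b / ψ a with hW
  set P : ℕ → Measure (Config d) := fun a =>
    if ψ a = 0 then P' a else Measure.sum fun b => W a b • P' b with hP
  have hPz : ∀ a, ψ a = 0 → P a = P' a := by
    intro a ha
    simp only [hP, if_pos ha]
  have hPn : ∀ a, ψ a ≠ 0 → P a = Measure.sum fun b => W a b • P' b := by
    intro a ha
    simp only [hP, if_neg ha]
  have hWsum : ∀ a, ψ a ≠ 0 → ∑' b, W a b = 1 := by
    intro a ha
    simp only [hW, div_eq_mul_inv]
    rw [ENNReal.tsum_mul_right, hrow a]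
    exact ENNReal.mul_inv_cancel ha (hψtop a)
  have hπW : ∀ a, ψ a ≠ 0 → ∀ b, ψ a * W a b = π a b := by
    intro a ha b
    simp only [hW, div_eq_mul_inv]
    rw [mul_comm (π a b), ← mul_assoc, ENNReal.mul_inv_cancel ha (hψtop a), one_mul]
  have hP'prob : ∀ b, IsProbabilityMeasure (P' b) := fun b => (hP'si b).1
  have hP'shift : ∀ b (z : Site d), (P' b).map (shift z) = P' b := fun b => (hP'si b).2
  have hPprob : ∀ a, IsProbabilityMeasure (P a) := by
    intro a
    rcases eq_or_ne (ψ a) 0 with ha | ha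
    · rw [hPz a ha]; exact hP'prob a
    · rw [hPn a ha]
      constructor
      rw [Measure.sum_apply _ MeasurableSet.univ]
      have hterm : ∀ b, (W a b • P' b) Set.univ = W a b := by
        intro b
        rw [Measure.smul_apply, smul_eq_mul, (hP'prob b).measure_univ, mul_one]
      rw [tsum_congr hterm, hWsum a ha]
  have hPshift : ∀ a (z : Site d), (P a).map (shift z) = P a := by
    intro a z
    rcases eq_or_ne (ψ a) 0 with ha | ha
    · rw [hPz a ha]; exact hP'shift a z
    · rw [hPn a ha]
      ext s hs
      rw [Measure.map_apply (measurable_shift z) hs,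
        Measure.sum_apply _ (measurable_shift z hs), Measure.sum_apply _ hs]
      refine tsum_congr fun b => ?_
      rw [Measure.smul_apply, Measure.smul_apply, smul_eq_mul, smul_eq_mul]
      congr 1
      rw [← Measure.map_apply (measurable_shift z) hs, hP'shift b z]
  have hlin : ∀ (f : Config d → ℝ≥0∞) (a : ℕ), ψ a ≠ 0 →
      ψ a * ∫⁻ ω, f ω ∂(P a) = ∑' b, π a b * ∫⁻ ω, f ω ∂(P' b) := by
    intro f a ha
    rw [hPn a ha, lintegral_sum_measure]
    simp_rw [lintegral_smul_measure]
    rw [← ENNReal.tsum_mul_left]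
    refine tsum_congr fun b => ?_
    rw [smul_eq_mul, ← mul_assoc, hπW a ha b]
  have hπ0 : ∀ a, ψ a = 0 → ∀ b, π a b = 0 := by
    intro a ha b
    have := hπle a b
    rw [ha] at this
    exact le_antisymm this (zero_le)
  have hadm : phiAdmissible M m ψ P := by
    constructor
    · exact fun a => ⟨hPprob a, hPshift a⟩
    · intro k
      rw [← hP'con k]
      calc ∑' a, ψ a * ∫⁻ ω, Ndelta k ω ∂(P a)
          = ∑' a, ∑' b, π a b * ∫⁻ ω, Ndelta k ω ∂(P' b) := by
            refine tsum_congr fun a => ?_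
            rcases eq_or_ne (ψ a) 0 with ha | ha
            · rw [ha, zero_mul]
              symm
              refine ENNReal.tsum_eq_zero.2 fun b => ?_
              rw [hπ0 a ha b, zero_mul]
            · exact hlin _ a ha
        _ = ∑' b, ∑' a, π a b * ∫⁻ ω, Ndelta k ω ∂(P' b) := ENNReal.tsum_comm
        _ = ∑' b, ψ' b * ∫⁻ ω, Ndelta k ω ∂(P' b) := by
            refine tsum_congr fun b => ?_
            rw [ENNReal.tsum_mul_right, hcol b]
  refine le_trans (sInf_le ⟨P, hadm, rfl⟩) ?_
  set X : ℕ → ℝ≥0∞ := fun b => entDens M.ref (P' b) + (∫⁻ ω, PhiZero M ω ∂(P' b))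
      + 2 * vbar M * (b : ℝ≥0∞) * (∫⁻ ω, Nell ω ∂(P' b)) + vbar M * (b : ℝ≥0∞) ^ 2 with hX
  have key : ∀ a, ψ a * (entDens M.ref (P a) + (∫⁻ ω, PhiZero M ω ∂(P a))
      + 2 * vbar M * (a : ℝ≥0∞) * (∫⁻ ω, Nell ω ∂(P a)) + vbar M * (a : ℝ≥0∞) ^ 2)
      ≤ ∑' b, π a b * X b := by
    intro a
    rcases eq_or_ne (ψ a) 0 with ha | ha
    · rw [ha, zero_mul]; exact zero_le
    · have hPa : P a = Measure.sum fun b => W a b • P' b := hPn a ha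
      have hE : ψ a * entDens M.ref (P a) ≤ ∑' b, π a b * entDens M.ref (P' b) := by
        rw [hPa]
        calc ψ a * entDens M.ref (Measure.sum fun b => W a b • P' b)
            ≤ ψ a * ∑' b, W a b * entDens M.ref (P' b) :=
              mul_le_mul' le_rfl (entDens_sum_le M (W a) (hWsum a ha) P' hP'prob hP'shift)
          _ = ∑' b, π a b * entDens M.ref (P' b) := by
              rw [← ENNReal.tsum_mul_left]
              exact tsum_congr fun b => by rw [← mul_assoc, hπW a ha b]
      have hΦ : ψ a * (∫⁻ ω, PhiZero M ω ∂(P a))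
          = ∑' b, π a b * ∫⁻ ω, PhiZero M ω ∂(P' b) := hlin _ a ha
      have hab_of : ∀ b, π a b ≠ 0 → (a : ℝ≥0∞) ≤ (b : ℝ≥0∞) := by
        intro b h0
        have hab : a ≤ b := by
          by_contra hc
          exact h0 (hsupp a b (not_le.1 hc))
        exact_mod_cast hab
      have hC : ψ a * (2 * vbar M * (a : ℝ≥0∞) * (∫⁻ ω, Nell ω ∂(P a)))
          ≤ ∑' b, π a b * (2 * vbar M * (b : ℝ≥0∞) * ∫⁻ ω, Nell ω ∂(P' b)) := by
        calc ψ a * (2 * vbar M * (a : ℝ≥0∞) * (∫⁻ ω, Nell ω ∂(P a)))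
            = 2 * vbar M * (a : ℝ≥0∞) * (ψ a * ∫⁻ ω, Nell ω ∂(P a)) := by ring
          _ = 2 * vbar M * (a : ℝ≥0∞) * ∑' b, π a b * ∫⁻ ω, Nell ω ∂(P' b) := by
              rw [hlin _ a ha]
          _ = ∑' b, π a b * (2 * vbar M * (a : ℝ≥0∞) * ∫⁻ ω, Nell ω ∂(P' b)) := by
              rw [← ENNReal.tsum_mul_left]
              exact tsum_congr fun b => by ring
          _ ≤ ∑' b, π a b * (2 * vbar M * (b : ℝ≥0∞) * ∫⁻ ω, Nell ω ∂(P' b)) := by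
              refine ENNReal.tsum_le_tsum fun b => ?_
              rcases eq_or_ne (π a b) 0 with h0 | h0
              · rw [h0, zero_mul, zero_mul]
              · exact mul_le_mul' le_rfl
                  (mul_le_mul' (mul_le_mul' le_rfl (hab_of b h0)) le_rfl)
      have hD : ψ a * (vbar M * (a : ℝ≥0∞) ^ 2)
          ≤ ∑' b, π a b * (vbar M * (b : ℝ≥0∞) ^ 2) := by
        calc ψ a * (vbar M * (a : ℝ≥0∞) ^ 2)
            = (∑' b, π a b) * (vbar M * (a : ℝ≥0∞) ^ 2) := by rw [hrow a]
          _ = ∑' b, π a b * (vbar M * (a : ℝ≥0∞) ^ 2) := ENNReal.tsum_mul_right.symm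
          _ ≤ ∑' b, π a b * (vbar M * (b : ℝ≥0∞) ^ 2) := by
              refine ENNReal.tsum_le_tsum fun b => ?_
              rcases eq_or_ne (π a b) 0 with h0 | h0
              · rw [h0, zero_mul, zero_mul]
              · refine mul_le_mul' le_rfl (mul_le_mul' le_rfl ?_)
                exact pow_le_pow_left₀ (zero_le) (hab_of b h0) 2
      calc ψ a * (entDens M.ref (P a) + (∫⁻ ω, PhiZero M ω ∂(P a))
            + 2 * vbar M * (a : ℝ≥0∞) * (∫⁻ ω, Nell ω ∂(P a)) + vbar M * (a : ℝ≥0∞) ^ 2)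
          = ψ a * entDens M.ref (P a) + ψ a * (∫⁻ ω, PhiZero M ω ∂(P a))
            + ψ a * (2 * vbar M * (a : ℝ≥0∞) * (∫⁻ ω, Nell ω ∂(P a)))
            + ψ a * (vbar M * (a : ℝ≥0∞) ^ 2) := by ring
        _ ≤ (∑' b, π a b * entDens M.ref (P' b))
            + (∑' b, π a b * ∫⁻ ω, PhiZero M ω ∂(P' b))
            + (∑' b, π a b * (2 * vbar M * (b : ℝ≥0∞) * ∫⁻ ω, Nell ω ∂(P' b)))
            + ∑' b, π a b * (vbar M * (b : ℝ≥0∞) ^ 2) :=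
            add_le_add (add_le_add (add_le_add hE (le_of_eq hΦ)) hC) hD
        _ = ∑' b, π a b * X b := by
            rw [← ENNReal.tsum_add, ← ENNReal.tsum_add, ← ENNReal.tsum_add]
            refine tsum_congr fun b => ?_
            rw [hX]
            ring
  calc phiObjective M ψ P
      = ∑' a, ψ a * (entDens M.ref (P a) + (∫⁻ ω, PhiZero M ω ∂(P a))
        + 2 * vbar M * (a : ℝ≥0∞) * (∫⁻ ω, Nell ω ∂(P a)) + vbar M * (a : ℝ≥0∞) ^ 2) := rfl
    _ ≤ ∑' a, ∑' b, π a b * X b := ENNReal.tsum_le_tsum key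
    _ = ∑' b, ∑' a, π a b * X b := ENNReal.tsum_comm
    _ = ∑' b, ψ' b * X b := by
        refine tsum_congr fun b => ?_
        rw [ENNReal.tsum_mul_right, hcol b]
    _ = phiObjective M ψ' P' := by
        simp only [hX]
        rfl

end Main

section Final

/-- Construction of the stochastically smaller PMF with prescribed smaller mean. -/
lemma exists_smaller_pmf (ψ' : PMF ℕ) {ρma ρma' : ℝ} (hρma : 0 ≤ ρma) (hle : ρma ≤ ρma')
    (hma' : (∑' a : ℕ, (a : ℝ≥0∞) * ψ' a) = ENNReal.ofReal ρma') :
    ∃ ψ : PMF ℕ,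
      (∀ a : ℕ, (∑' b, if a ≤ b then ψ b else 0) ≤ ∑' b, if a ≤ b then ψ' b else 0) ∧
      (∑' a : ℕ, (a : ℝ≥0∞) * ψ a) = ENNReal.ofReal ρma := by
  classical
  rcases eq_or_ne (ENNReal.ofReal ρma') 0 with h0 | h0
  · have hz : ENNReal.ofReal ρma = 0 :=
      le_antisymm (h0 ▸ ENNReal.ofReal_le_ofReal hle) (zero_le)
    exact ⟨ψ', fun a => le_rfl, by rw [hma', h0, hz]⟩
  · set θ : ℝ≥0∞ := ENNReal.ofReal ρma / ENNReal.ofReal ρma' with hθ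
    have hθle : θ ≤ 1 := by
      rw [hθ]
      calc ENNReal.ofReal ρma / ENNReal.ofReal ρma'
          ≤ ENNReal.ofReal ρma' / ENNReal.ofReal ρma' :=
            ENNReal.div_le_div_right (ENNReal.ofReal_le_ofReal hle) _
        _ = 1 := ENNReal.div_self h0 ENNReal.ofReal_ne_top
    set f : ℕ → ℝ≥0∞ := fun a => (if a = 0 then 1 - θ else 0) + θ * ψ' a with hf
    have hsum : ∑' a, f a = 1 := by
      rw [hf]
      rw [ENNReal.tsum_add, tsum_ite_eq, ENNReal.tsum_mul_left, ψ'.tsum_coe, mul_one,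
        tsub_add_cancel_of_le hθle]
    set ψ : PMF ℕ := ⟨f, (Summable.hasSum_iff ENNReal.summable).2 hsum⟩ with hψ
    have hψa : ∀ a, ψ a = f a := fun a => rfl
    have htail : ∀ a : ℕ, (∑' b, if a ≤ b then ψ b else 0)
        = (if a = 0 then 1 - θ else 0) + θ * (∑' b, if a ≤ b then ψ' b else 0) := by
      intro a
      have hsplit : ∀ b : ℕ, (if a ≤ b then ψ b else 0)
          = (if b = 0 then (if a = 0 then 1 - θ else 0) else 0)
            + (θ * if a ≤ b then ψ' b else 0) := by
        intro b
        simp only [hψa, hf]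
        rcases Nat.eq_zero_or_pos b with rfl | hb
        · rcases Nat.eq_zero_or_pos a with rfl | haa
          · simp
          · rw [if_neg (by omega), if_pos rfl, if_neg (by omega), if_neg (by omega)]
            simp
        · have hb0 : ¬ b = 0 := by omega
          by_cases hab : a ≤ b
          · rw [if_pos hab, if_neg hb0, if_pos hab, if_neg hb0, zero_add]
          · rw [if_neg hab, if_neg hb0, if_neg hab, zero_add, mul_zero]
      rw [tsum_congr hsplit, ENNReal.tsum_add, tsum_ite_eq, ENNReal.tsum_mul_left]
    refine ⟨ψ, fun a => ?_, ?_⟩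
    · rw [htail a]
      rcases Nat.eq_zero_or_pos a with rfl | ha
      · rw [if_pos rfl]
        have h1 : (∑' b : ℕ, if (0 : ℕ) ≤ b then ψ' b else 0) = 1 := by
          rw [tsum_congr (fun b => if_pos (Nat.zero_le b)), ψ'.tsum_coe]
        rw [h1, mul_one, tsub_add_cancel_of_le hθle, ← h1]
      · rw [if_neg (by omega), zero_add]
        calc θ * (∑' b, if a ≤ b then ψ' b else 0)
            ≤ 1 * (∑' b, if a ≤ b then ψ' b else 0) := mul_le_mul' hθle le_rfl
          _ = ∑' b, if a ≤ b then ψ' b else 0 := one_mul _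
    · have hsplit : ∀ a : ℕ, (a : ℝ≥0∞) * ψ a = θ * ((a : ℝ≥0∞) * ψ' a) := by
        intro a
        simp only [hψa, hf]
        rw [mul_add]
        rcases Nat.eq_zero_or_pos a with rfl | ha
        · simp
        · rw [if_neg (by omega), mul_zero, zero_add]
          ring
      rw [tsum_congr hsplit, ENNReal.tsum_mul_left, hma', hθ,
        ENNReal.div_mul_cancel h0 ENNReal.ofReal_ne_top]

end Final

end Proofs

/-- Lemma: `ψ ↦ φ(m,ψ)` is non-decreasing for the stochastic ordering;
consequently `ρ_ma ↦ χ(ρ_mi,ρ_ma)` is non-decreasing. -/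
theorem phi_mono_stochastic {d : ℕ} (hd : 0 < d) (M : Model d) :
    (∀ (m : ℕ+ → ℝ≥0) (ψ ψ' : PMF ℕ),
      (∀ a : ℕ, (∑' b : ℕ, if a ≤ b then ψ b else 0) ≤ ∑' b : ℕ, if a ≤ b then ψ' b else 0) →
      phi M m ψ ≤ phi M m ψ') ∧
    (∀ ρmi ρma ρma' : ℝ, 0 ≤ ρmi → 0 ≤ ρma → ρma ≤ ρma' →
      chi M (ENNReal.ofReal ρmi) (ENNReal.ofReal ρma)
        ≤ chi M (ENNReal.ofReal ρmi) (ENNReal.ofReal ρma')) := by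
  constructor
  · exact fun m ψ ψ' h => phi_mono M m ψ ψ' h
  · intro ρmi ρma ρma' hρmi hρma hle
    refine le_sInf fun r hr => ?_
    obtain ⟨mm, ψ', hmi, hma', rfl⟩ := hr
    obtain ⟨ψ, hst, hmean⟩ := exists_smaller_pmf ψ' hρma hle hma'
    exact le_trans (sInf_le ⟨mm, ψ, hmi, hmean, rfl⟩) (phi_mono M mm ψ ψ' hst)

end BoxBose
end
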